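/- arXiv:1610.05453 — 8 statements merged into one kernel-verified Lean document; each statement's English description precedes it below -/
import Mathlib

section
/- For any discrete filtered set Ω, the closure in ℝ × ℂ of the set S_Ω := { (λ, ω) ∈ ℝ × ℂ : λ ≥ 0 and ω ∈ Ω_λ } equals S_{Ω̃} := { (λ, ω) : λ ≥ 0 and ω ∈ Ω̃_λ }, where Ω̃ is the upper closure of Ω. Consequently, the allowed open sets M_Ω := (ℝ × ℂ) \ closure(S_Ω) and M_{Ω̃} coincide. -/
open MeasureTheory Metric Set

noncomputable section

/-- A discrete filtered set (d.f.s.): a family of finite subsets of `ℂ`,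
nondecreasing in the parameter, empty for small parameter. -/
structure DFS where
  sets : ℝ → Set ℂ
  finite : ∀ L, (sets L).Finite
  mono : ∀ ⦃L₁ L₂ : ℝ⦄, L₁ ≤ L₂ → sets L₁ ⊆ sets L₂
  empty_small : ∃ δ > 0, sets δ = ∅

/-- Upper closure of a filtered family: `Ω̃_L := ⋂_{ε>0} Ω_{L+ε}`. -/
def ucFun (f : ℝ → Set ℂ) (L : ℝ) : Set ℂ := ⋂ ε > (0:ℝ), f (L + ε)

/-- `S_Ω := {(λ,ω) : λ ≥ 0, ω ∈ Ω_λ}`. -/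
def SingSet (f : ℝ → Set ℂ) : Set (ℝ × ℂ) := {p | 0 ≤ p.1 ∧ p.2 ∈ f p.1}

/-- The allowed open set `M_Ω := (ℝ×ℂ) \ closure S_Ω`. -/
def MSet (f : ℝ → Set ℂ) : Set (ℝ × ℂ) := (closure (SingSet f))ᶜ

/-- Sum of two filtered families. -/
def sumFun (f g : ℝ → Set ℂ) (L : ℝ) : Set ℂ :=
  {z | ∃ L₁ L₂ : ℝ, 0 ≤ L₁ ∧ 0 ≤ L₂ ∧ L₁ + L₂ = L ∧
      ∃ ω₁ ∈ f L₁, ∃ ω₂ ∈ g L₂, z = ω₁ + ω₂} ∪ f L ∪ g L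

/-- `iterSum f n` is the `(n+1)`-fold sum `f * ⋯ * f`. -/
def iterSum (f : ℝ → Set ℂ) : ℕ → ℝ → Set ℂ
  | 0 => f
  | n + 1 => sumFun (iterSum f n) f

/-- Arclength of `γ` on `[0,t]`. -/
def pathLen (γ : ℝ → ℂ) (t : ℝ) : ℝ := (eVariationOn γ (Set.Icc 0 t)).toReal

/-- `γ : [0,t₁] → ℂ` is an `Ω`-allowed path. -/
def OmAllowed (f : ℝ → Set ℂ) (γ : ℝ → ℂ) (t₁ : ℝ) : Prop :=
  0 ≤ t₁ ∧ γ 0 = 0 ∧ (∃ K, LipschitzOnWith K γ (Set.Icc 0 t₁)) ∧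
    ∀ t ∈ Set.Icc 0 t₁, (pathLen γ t, γ t) ∈ MSet f

/-- The germ `φ` admits analytic continuation along `γ|_{[0,t₁]}`, ending
with the germ `ψ` at `γ t₁`. -/
def ContinuesAlongTo (φ : ℂ → ℂ) (γ : ℝ → ℂ) (t₁ : ℝ) (ψ : ℂ → ℂ) : Prop :=
  ∃ (F : ℝ → ℂ → ℂ) (r : ℝ → ℝ),
    (∀ t ∈ Set.Icc 0 t₁, 0 < r t ∧ DifferentiableOn ℂ (F t) (ball (γ t) (r t))) ∧
    (∀ t ∈ Set.Icc 0 t₁, ∀ᶠ s in nhdsWithin t (Set.Icc 0 t₁),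
        Set.EqOn (F s) (F t) (ball (γ s) (r s) ∩ ball (γ t) (r t))) ∧
    (∀ᶠ z in nhds 0, F 0 z = φ z) ∧
    (∀ᶠ z in nhds (γ t₁), F t₁ z = ψ z)

/-- The germ `φ` admits analytic continuation along `γ|_{[0,t₁]}`. -/
def ContinuesAlong (φ : ℂ → ℂ) (γ : ℝ → ℂ) (t₁ : ℝ) : Prop :=
  ∃ ψ, ContinuesAlongTo φ γ t₁ ψ

/-- `φ` defines a holomorphic germ at `0`. -/
def HolGermAtZero (φ : ℂ → ℂ) : Prop := ∃ r > 0, DifferentiableOn ℂ φ (ball 0 r)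

/-- `Ω`-continuability: analytic continuation along every `Ω`-allowed path. -/
def OmContinuable (f : ℝ → Set ℂ) (φ : ℂ → ℂ) : Prop :=
  HolGermAtZero φ ∧ ∀ γ t₁, OmAllowed f γ t₁ → ContinuesAlong φ γ t₁

/-- Endless continuability. -/
def EndlesslyContinuable (φ : ℂ → ℂ) : Prop :=
  HolGermAtZero φ ∧ ∀ L > (0:ℝ), ∃ F : Set ℂ, F.Finite ∧
    ∀ γ : ℝ → ℂ, γ 0 = 0 → (∃ K, LipschitzOnWith K γ (Set.Icc 0 1)) →
      pathLen γ 1 < L → (∀ t ∈ Set.Ioc (0:ℝ) 1, γ t ∉ F) →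
      ContinuesAlong φ γ 1

/-- Euclidean norm on `ℝ × ℂ ≅ ℝ³`. -/
def eucNorm (p : ℝ × ℂ) : ℝ := Real.sqrt (p.1 ^ 2 + ‖p.2‖ ^ 2)

/-- Euclidean distance on `ℝ × ℂ ≅ ℝ³`. -/
def eucDist (p q : ℝ × ℂ) : ℝ := eucNorm (p - q)

/-- Euclidean distance from a point to a set in `ℝ × ℂ`. -/
def eucSetDist (p : ℝ × ℂ) (S : Set (ℝ × ℂ)) : ℝ := sInf (eucDist p '' S)

/-- The d.f.s. associated with a closed discrete set `Σ`. -/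
def omOf (S : Set ℂ) (L : ℝ) : Set ℂ := {ω ∈ S | ‖ω‖ ≤ L}

/-- `η(v) := dist(v, {(0,0)} ∪ S_Ω)`. -/
def etaFun (f : ℝ → Set ℂ) (v : ℝ × ℂ) : ℝ :=
  eucSetDist v ({((0:ℝ), (0:ℂ))} ∪ SingSet f)

/-- `D(w, v⃗) := Σⱼ η(vⱼ) + |w − Σⱼ vⱼ|`. -/
def DFun (f : ℝ → Set ℂ) (n : ℕ) (w : ℝ × ℂ) (v : Fin n → ℝ × ℂ) : ℝ :=
  (∑ j, etaFun f (v j)) + eucNorm (w - ∑ j, v j)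

/-- Convolution of holomorphic germs: `(f*g)(ζ) = ∫₀^ζ f(ξ)g(ζ-ξ)dξ`. -/
def cvl (f g : ℂ → ℂ) (ζ : ℂ) : ℂ := ζ * ∫ s in (0:ℝ)..1, f (s • ζ) * g (ζ - s • ζ)

/-- Iterated convolution `1 * f₁ * ⋯ * f_n`. -/
def iterConv : (n : ℕ) → (Fin n → ℂ → ℂ) → ℂ → ℂ
  | 0, _ => fun _ => 1
  | n + 1, f => cvl (iterConv n (fun i => f i.castSucc)) (f (Fin.last n))

/-- The standard simplex `Δ_n`. -/
def simplex (n : ℕ) : Set (Fin n → ℝ) := {s | (∀ i, 0 ≤ s i) ∧ ∑ i, s i ≤ 1}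

end

/-- `closure S_Ω = S_{Ω̃}`, hence `M_Ω = M_{Ω̃}`. -/
theorem closure_SingSet (Ω : DFS) :
    closure (SingSet Ω.sets) = SingSet (ucFun Ω.sets) ∧
    MSet Ω.sets = MSet (ucFun Ω.sets) := by
  have hsub : SingSet Ω.sets ⊆ SingSet (ucFun Ω.sets) := by
    rintro ⟨l, w⟩ ⟨hl, hw⟩
    exact ⟨hl, Set.mem_iInter₂.2 fun ε hε => Ω.mono (by linarith) hw⟩
  have hclosed : IsClosed (SingSet (ucFun Ω.sets)) := by
    rw [← isOpen_compl_iff, isOpen_iff_mem_nhds]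
    rintro ⟨l, w⟩ hp
    simp only [Set.mem_compl_iff, SingSet, Set.mem_setOf_eq, not_and] at hp
    by_cases hl : 0 ≤ l
    · have hw := hp hl
      obtain ⟨ε, hε, hwε⟩ : ∃ ε > 0, w ∉ Ω.sets (l + ε) := by
        by_contra h
        push_neg at h
        exact hw (Set.mem_iInter₂.2 fun ε hε => h ε hε)
      have hcl : IsClosed (Ω.sets (l + ε)) := (Ω.finite (l + ε)).isClosed
      obtain ⟨δ, hδ, hball⟩ : ∃ δ > 0, ∀ z ∈ Metric.ball w δ, z ∉ Ω.sets (l + ε) := by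
        rcases Metric.isOpen_iff.1 hcl.isOpen_compl w hwε with ⟨δ, hδ, hs⟩
        exact ⟨δ, hδ, fun z hz => hs hz⟩
      have hnhds : (Set.Iio (l + ε) ×ˢ Metric.ball w δ) ∈ nhds ((l, w) : ℝ × ℂ) := by
        apply prod_mem_nhds
        · exact Iio_mem_nhds (by linarith)
        · exact Metric.ball_mem_nhds w hδ
      refine Filter.mem_of_superset hnhds ?_
      rintro ⟨l', w'⟩ ⟨hl', hw'⟩
      simp only [Set.mem_compl_iff, SingSet, Set.mem_setOf_eq, not_and]
      intro _ hmem
      have hmem' : w' ∈ Ω.sets (l' + (l + ε - l')) :=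
        Set.mem_iInter₂.1 hmem (l + ε - l') (by simp only [Set.mem_Iio] at hl'; linarith)
      have : w' ∈ Ω.sets (l + ε) := by
        have heq : l' + (l + ε - l') = l + ε := by ring
        rwa [heq] at hmem'
      exact hball w' hw' this
    · have hnhds : (Set.Iio (0:ℝ) ×ˢ (Set.univ : Set ℂ)) ∈ nhds ((l, w) : ℝ × ℂ) := by
        apply prod_mem_nhds
        · exact Iio_mem_nhds (lt_of_not_ge hl)
        · exact Filter.univ_mem
      refine Filter.mem_of_superset hnhds ?_
      rintro ⟨l', w'⟩ ⟨hl', -⟩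
      simp only [Set.mem_compl_iff, SingSet, Set.mem_setOf_eq, not_and]
      intro h
      exact absurd h (not_le.2 hl')
  have hmain : closure (SingSet Ω.sets) = SingSet (ucFun Ω.sets) := by
    apply le_antisymm
    · exact closure_minimal hsub hclosed
    · rintro ⟨l, w⟩ ⟨hl, hw⟩
      have htend : Filter.Tendsto (fun ε : ℝ => ((l + ε, w) : ℝ × ℂ))
          (nhdsWithin 0 (Set.Ioi 0)) (nhds (l, w)) := by
        have h1 : Filter.Tendsto (fun ε : ℝ => l + ε) (nhdsWithin 0 (Set.Ioi 0)) (nhds l) := by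
          have h0 : Filter.Tendsto (fun ε : ℝ => l + ε) (nhds 0) (nhds l) := by
            have : Continuous (fun ε : ℝ => l + ε) := continuous_const.add continuous_id
            simpa using this.tendsto 0
          exact h0.mono_left nhdsWithin_le_nhds
        exact h1.prodMk_nhds tendsto_const_nhds
      refine mem_closure_of_tendsto htend ?_
      filter_upwards [self_mem_nhdsWithin] with ε hε
      refine ⟨?_, Set.mem_iInter₂.1 hw ε hε⟩
      have hl' : (0:ℝ) ≤ l := hl
      have hε' : (0:ℝ) < ε := hε
      show (0:ℝ) ≤ l + ε
      linarith
  exact ⟨hmain, by rw [MSet, MSet, hmain, hclosed.closure_eq]⟩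
end

section
/- Let Ω be a d.f.s., let γ: [0,1] → ℂ be a Lipschitz path with γ(0) = 0, and let (L_n) be a sequence as in the structure lemma for Ω (so Ω̃_{L_n} = Ω̃_L = Ω_L for L_n < L < L_{n+1}). Then the following are equivalent: (1) γ is Ω-allowed; (2) γ(t) ∉ Ω̃_{L(γ|_{[0,t]})} for every t ∈ [0,1]; (3) for every t there exists n with L(γ|_{[0,t]}) < L_{n+1} and γ(t) ∉ Ω̃_{L_n}. Moreover the Ω-allowed paths coincide with the Ω̃-allowed paths. -/
open MeasureTheory Metric Set

lemma ucFun_mono {f : ℝ → Set ℂ} (hf : ∀ ⦃L₁ L₂ : ℝ⦄, L₁ ≤ L₂ → f L₁ ⊆ f L₂)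
    {L₁ L₂ : ℝ} (h : L₁ ≤ L₂) : ucFun f L₁ ⊆ ucFun f L₂ := by
  intro z hz
  simp only [ucFun, Set.mem_iInter] at hz ⊢
  intro ε hε
  exact hf (by linarith) (hz ε hε)

lemma subset_ucFun {f : ℝ → Set ℂ} (hf : ∀ ⦃L₁ L₂ : ℝ⦄, L₁ ≤ L₂ → f L₁ ⊆ f L₂)
    (L : ℝ) : f L ⊆ ucFun f L := by
  intro z hz
  simp only [ucFun, Set.mem_iInter]
  intro ε hε
  exact hf (by linarith) hz

lemma isClosed_singSet_uc {f : ℝ → Set ℂ} (hfin : ∀ L, (f L).Finite)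
    (hf : ∀ ⦃L₁ L₂ : ℝ⦄, L₁ ≤ L₂ → f L₁ ⊆ f L₂) :
    IsClosed (SingSet (ucFun f)) := by
  rw [← isOpen_compl_iff, isOpen_iff_mem_nhds]
  rintro ⟨L, z⟩ hp
  simp only [SingSet, Set.mem_compl_iff, Set.mem_setOf_eq, not_and] at hp
  by_cases hL : 0 ≤ L
  · have hz := hp hL
    simp only [ucFun, Set.mem_iInter] at hz
    push_neg at hz
    obtain ⟨ε, hε, hzf⟩ := hz
    have hmem : (Set.Iio (L + ε / 2)) ×ˢ (f (L + ε))ᶜ ∈ nhds (L, z) := by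
      apply prod_mem_nhds
      · exact Iio_mem_nhds (by linarith)
      · exact ((hfin (L + ε)).isClosed.isOpen_compl).mem_nhds hzf
    refine Filter.mem_of_superset hmem ?_
    rintro ⟨L', z'⟩ ⟨h1, h2⟩
    simp only [Set.mem_Iio] at h1
    simp only [Set.mem_compl_iff, SingSet, Set.mem_setOf_eq, not_and]
    intro _ hz'
    simp only [ucFun, Set.mem_iInter] at hz'
    have h3 : z' ∈ f (L' + (L + ε - L')) := hz' (L + ε - L') (by linarith)
    rw [show L' + (L + ε - L') = L + ε by ring] at h3
    exact h2 h3
  · have hmem : (Set.Iio (0 : ℝ)) ×ˢ (Set.univ : Set ℂ) ∈ nhds (L, z) := by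
      apply prod_mem_nhds
      · exact Iio_mem_nhds (lt_of_not_ge hL)
      · exact Filter.univ_mem
    refine Filter.mem_of_superset hmem ?_
    rintro ⟨L', z'⟩ ⟨h1, -⟩
    simp only [Set.mem_Iio] at h1
    simp only [Set.mem_compl_iff, SingSet, Set.mem_setOf_eq, not_and]
    intro h0'
    exact absurd h0' (not_le.mpr h1)

lemma closure_singSet {f : ℝ → Set ℂ} (hfin : ∀ L, (f L).Finite)
    (hf : ∀ ⦃L₁ L₂ : ℝ⦄, L₁ ≤ L₂ → f L₁ ⊆ f L₂) :
    closure (SingSet f) = SingSet (ucFun f) := by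
  apply subset_antisymm
  · apply closure_minimal _ (isClosed_singSet_uc hfin hf)
    rintro ⟨L, z⟩ ⟨h0, hz⟩
    exact ⟨h0, subset_ucFun hf L hz⟩
  · rintro ⟨L, z⟩ ⟨h0, hz⟩
    rw [Metric.mem_closure_iff]
    intro ε hε
    simp only [ucFun, Set.mem_iInter] at hz
    refine ⟨(L + ε / 2, z), ⟨by simp; linarith, hz (ε / 2) (by linarith)⟩, ?_⟩
    rw [Prod.dist_eq]
    apply max_lt
    · rw [Real.dist_eq]
      rw [show L - (L + ε / 2) = -(ε / 2) by ring, abs_neg, abs_of_pos (by linarith)]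
      linarith
    · simpa using hε

/-- Characterization of `Ω`-allowed paths. -/
theorem allowed_characterization (Ω : DFS) (γ : ℝ → ℂ) (hγ0 : γ 0 = 0)
    (hlip : ∃ K, LipschitzOnWith K γ (Set.Icc 0 1))
    (Lseq : ℕ → ℝ) (h0 : Lseq 0 = 0) (hmono : StrictMono Lseq)
    (htop : Filter.Tendsto Lseq Filter.atTop Filter.atTop)
    (hstruct : ∀ n : ℕ, ∀ l : ℝ, Lseq n < l → l < Lseq (n + 1) →
      ucFun Ω.sets (Lseq n) = ucFun Ω.sets l ∧ ucFun Ω.sets l = Ω.sets l) :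
    (OmAllowed Ω.sets γ 1 ↔
      ∀ t ∈ Set.Icc (0:ℝ) 1, γ t ∉ ucFun Ω.sets (pathLen γ t)) ∧
    ((∀ t ∈ Set.Icc (0:ℝ) 1, γ t ∉ ucFun Ω.sets (pathLen γ t)) ↔
      ∀ t ∈ Set.Icc (0:ℝ) 1, ∃ n : ℕ,
        pathLen γ t < Lseq (n + 1) ∧ γ t ∉ ucFun Ω.sets (Lseq n)) ∧
    (∀ (γ' : ℝ → ℂ) (t₁ : ℝ),
      OmAllowed Ω.sets γ' t₁ ↔ OmAllowed (ucFun Ω.sets) γ' t₁) := by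
  have cl : closure (SingSet Ω.sets) = SingSet (ucFun Ω.sets) :=
    closure_singSet Ω.finite Ω.mono
  refine ⟨?_, ?_, ?_⟩
  · constructor
    · rintro ⟨-, -, -, h⟩ t ht hmem
      have h1 := h t ht
      rw [MSet, Set.mem_compl_iff, cl] at h1
      exact h1 ⟨ENNReal.toReal_nonneg, hmem⟩
    · intro h
      refine ⟨zero_le_one, hγ0, hlip, fun t ht => ?_⟩
      rw [MSet, Set.mem_compl_iff, cl]
      rintro ⟨-, hmem⟩
      exact h t ht hmem
  · constructor
    · intro h t ht
      set ℓ := pathLen γ t with hℓdef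
      have hℓ0 : 0 ≤ ℓ := ENNReal.toReal_nonneg
      have hex : ∃ n : ℕ, ℓ < Lseq (n + 1) := by
        obtain ⟨N, hN⟩ := (htop.eventually_gt_atTop ℓ).exists_forall_of_atTop
        exact ⟨N, hN (N + 1) (Nat.le_succ N)⟩
      set m := Nat.find hex with hmdef
      have hm1 : ℓ < Lseq (m + 1) := Nat.find_spec hex
      have hm2 : Lseq m ≤ ℓ := by
        cases' Nat.eq_zero_or_pos m with h0' hpos
        · rw [h0', h0]; exact hℓ0
        · obtain ⟨k, hk⟩ := Nat.exists_eq_succ_of_ne_zero (Nat.pos_iff_ne_zero.mp hpos)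
          have hmin := Nat.find_min hex (m := k) (by omega)
          rw [hk]
          exact not_lt.mp hmin
      refine ⟨m, hm1, ?_⟩
      rcases eq_or_lt_of_le hm2 with heq | hlt
      · rw [heq]; exact h t ht
      · rw [(hstruct m ℓ hlt hm1).1]; exact h t ht
    · intro h t ht hmem
      obtain ⟨n, hn1, hn2⟩ := h t ht
      rcases le_or_gt (pathLen γ t) (Lseq n) with hle | hlt
      · exact hn2 (ucFun_mono Ω.mono hle hmem)
      · rw [(hstruct n (pathLen γ t) hlt hn1).1] at hn2
        exact hn2 hmem
  · intro γ' t₁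
    have hM : MSet Ω.sets = MSet (ucFun Ω.sets) := by
      unfold MSet
      rw [cl, (isClosed_singSet_uc Ω.finite Ω.mono).closure_eq]
    rw [OmAllowed, OmAllowed, hM]
end

section
/- (Path modification lemma.) Suppose a holomorphic germ φ at 0 ∈ ℂ can be analytically continued along a Lipschitz path γ: [0,t*] → ℂ with γ(0) = 0, and let F be a finite subset of ℂ. Then for each ε > 0 there exists a Lipschitz path γ*: [0,t*] → ℂ with γ*(0) = 0 such that γ*((0,t*)) ⊆ ℂ \ F, the length of γ* is less than the length of γ plus ε, γ*(t*) = γ(t*), φ can be analytically continued along γ*, and the analytic continuations of φ along γ and γ* coincide (as germs at γ(t*)). -/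
open MeasureTheory Metric Set

open scoped NNReal ENNReal

lemma eVariationOn_add_le (f g : ℝ → ℂ) (s : Set ℝ) :
    eVariationOn (fun t => f t + g t) s ≤ eVariationOn f s + eVariationOn g s := by
  apply iSup_le
  rintro ⟨n, ⟨u, hu, us⟩⟩
  simp only
  calc ∑ i ∈ Finset.range n, edist (f (u (i+1)) + g (u (i+1))) (f (u i) + g (u i))
      ≤ ∑ i ∈ Finset.range n,
          (edist (f (u (i+1))) (f (u i)) + edist (g (u (i+1))) (g (u i))) :=
        Finset.sum_le_sum (fun i _ => edist_add_add_le _ _ _ _)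
    _ = (∑ i ∈ Finset.range n, edist (f (u (i+1))) (f (u i)))
        + ∑ i ∈ Finset.range n, edist (g (u (i+1))) (g (u i)) := Finset.sum_add_distrib
    _ ≤ _ := add_le_add (eVariationOn.sum_le (f := f) (n := n) hu us) (eVariationOn.sum_le (f := g) (n := n) hu us)

lemma evar_lip {f : ℝ → ℂ} {K : ℝ≥0} {a b : ℝ} (hab : a ≤ b)
    (h : LipschitzOnWith K f (Icc a b)) :
    eVariationOn f (Icc a b) ≤ (K : ℝ≥0∞) * ENNReal.ofReal (b - a) := by
  have hid : eVariationOn (fun x : ℝ => x) (Icc a b) ≤ ENNReal.ofReal (b - a) := by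
    have := MonotoneOn.eVariationOn_le (f := fun x : ℝ => x) (s := Icc a b)
      (fun x _ y _ h => h) (left_mem_Icc.2 hab) (right_mem_Icc.2 hab)
    simpa using this
  calc eVariationOn f (Icc a b) = eVariationOn (f ∘ (fun x : ℝ => x)) (Icc a b) := rfl
    _ ≤ (K : ℝ≥0∞) * eVariationOn (fun x : ℝ => x) (Icc a b) :=
        LipschitzOnWith.comp_eVariationOn_le h (mapsTo_id _)
    _ ≤ _ := mul_le_mul_right hid _


-- local Lipschitz estimate for the quotient map
lemma quot_lip (γ : ℝ → ℂ) {t₁ : ℝ} (ht : 0 < t₁) {K : ℝ≥0}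
    (hlip : LipschitzOnWith K γ (Icc 0 t₁)) (hγ0 : γ 0 = 0) (p : ℂ)
    {t₀ : ℝ} (ht₀ : t₀ ∈ Ioo 0 t₁) :
    ∃ C : ℝ≥0, ∃ N ∈ nhdsWithin t₀ (Ioo 0 t₁),
      LipschitzOnWith C (fun t => (p - γ t) / ((min t (t₁ - t) : ℝ) : ℂ)) N := by
  set a := min t₀ (t₁ - t₀) with ha
  have ha0 : 0 < a := lt_min ht₀.1 (by linarith [ht₀.2])
  set N : Set ℝ := Icc (t₀ - a/2) (t₀ + a/2) ∩ Ioo 0 t₁ with hN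
  have hmem : N ∈ nhdsWithin t₀ (Ioo 0 t₁) := by
    refine Filter.inter_mem (mem_nhdsWithin_of_mem_nhds (Icc_mem_nhds ?_ ?_)) self_mem_nhdsWithin
    · linarith
    · linarith
  have M : ℝ := 0
  set Mv : ℝ := ‖p‖ + (K : ℝ) * t₁ with hMv
  set Craw : ℝ := ((K : ℝ) * t₁ + Mv) / ((a/2)^2) with hCraw
  have hCnn : 0 ≤ Craw := by
    apply div_nonneg
    · have : (0:ℝ) ≤ (K:ℝ) := K.coe_nonneg
      positivity
    · positivity
  refine ⟨Real.toNNReal Craw, N, hmem, ?_⟩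
  -- basic facts on N
  have hb : ∀ s ∈ N, a/2 ≤ min s (t₁ - s) ∧ min s (t₁ - s) ≤ t₁ := by
    rintro s ⟨⟨h1, h2⟩, h3, h4⟩
    constructor
    · apply le_min
      · have : a ≤ t₀ := min_le_left _ _
        linarith
      · have : a ≤ t₁ - t₀ := min_le_right _ _
        linarith
    · exact le_trans (min_le_left _ _) h4.le
  have hsub : N ⊆ Icc 0 t₁ := fun s hs => ⟨hs.2.1.le, hs.2.2.le⟩
  have hbcl : ∀ s ∈ N, ‖p - γ s‖ ≤ Mv := by
    intro s hs
    have h1 : ‖γ s‖ ≤ (K : ℝ) * t₁ := by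
      have := hlip.dist_le_mul s (hsub hs) 0 ⟨le_refl 0, ht.le⟩
      rw [hγ0, dist_zero_right] at this
      refine this.trans ?_
      have : dist s 0 ≤ t₁ := by
        rw [Real.dist_eq]
        rw [show s - 0 = s by ring, abs_of_nonneg (hs.2.1.le)]; exact hs.2.2.le
      nlinarith [K.coe_nonneg]
    calc ‖p - γ s‖ ≤ ‖p‖ + ‖γ s‖ := norm_sub_le _ _
      _ ≤ Mv := by rw [hMv]; linarith
  apply LipschitzOnWith.of_dist_le_mul
  intro s hs t htm
  set u : ℝ := min s (t₁ - s) with hu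
  set v : ℝ := min t (t₁ - t) with hv
  have hu0 : a/2 ≤ u := (hb s hs).1
  have hv0 : a/2 ≤ v := (hb t htm).1
  have hut : u ≤ t₁ := (hb s hs).2
  have hvt : v ≤ t₁ := (hb t htm).2
  have huv : |u - v| ≤ |s - t| := by
    have h2 : LipschitzWith 1 (fun x : ℝ => min x (t₁ - x)) := by
      have h3 : LipschitzWith 1 (fun x : ℝ => t₁ - x) := by
        apply LipschitzWith.of_dist_le_mul
        intro x y
        rw [Real.dist_eq, Real.dist_eq, show t₁ - x - (t₁ - y) = -(x - y) by ring, abs_neg]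
        simp
      simpa using LipschitzWith.id.min h3
    have := h2.dist_le_mul s t
    simpa [Real.dist_eq] using this
  have hgl : ‖γ s - γ t‖ ≤ (K : ℝ) * |s - t| := by
    have := hlip.dist_le_mul s (hsub hs) t (hsub htm)
    simpa [dist_eq_norm, Real.dist_eq] using this
  have hune : (u : ℂ) ≠ 0 := by
    simp only [ne_eq, Complex.ofReal_eq_zero]
    nlinarith
  have hvne : (v : ℂ) ≠ 0 := by
    simp only [ne_eq, Complex.ofReal_eq_zero]
    nlinarith
  have key : (p - γ s) / (u : ℂ) - (p - γ t) / (v : ℂ)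
      = (((γ t - γ s) * v) + (p - γ t) * ((v : ℂ) - u)) / ((u : ℂ) * v) := by
    field_simp
    ring
  rw [dist_eq_norm, key, norm_div]
  have hnorm_den : ‖(u : ℂ) * v‖ = u * v := by
    rw [norm_mul, Complex.norm_real, Complex.norm_real, Real.norm_eq_abs, Real.norm_eq_abs,
      abs_of_nonneg (by nlinarith : (0:ℝ) ≤ u), abs_of_nonneg (by nlinarith : (0:ℝ) ≤ v)]
  have hnum : ‖((γ t - γ s) * (v:ℂ)) + (p - γ t) * ((v : ℂ) - u)‖
      ≤ (K : ℝ) * |s - t| * t₁ + Mv * |s - t| := by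
    calc ‖((γ t - γ s) * (v:ℂ)) + (p - γ t) * ((v : ℂ) - u)‖
        ≤ ‖(γ t - γ s) * (v:ℂ)‖ + ‖(p - γ t) * ((v : ℂ) - u)‖ := norm_add_le _ _
      _ = ‖γ t - γ s‖ * |v| + ‖p - γ t‖ * |v - u| := by
          rw [norm_mul, norm_mul, Complex.norm_real, ← Complex.ofReal_sub, Complex.norm_real,
            Real.norm_eq_abs, Real.norm_eq_abs]
      _ ≤ (K : ℝ) * |s - t| * t₁ + Mv * |s - t| := by
          have h1 : ‖γ t - γ s‖ ≤ (K:ℝ) * |s - t| := by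
            rwa [show γ t - γ s = -(γ s - γ t) by ring, norm_neg]
          have h2 : |v| ≤ t₁ := by rw [abs_of_nonneg (by nlinarith)]; exact hvt
          have h3 := hbcl t htm
          have h4 : |v - u| ≤ |s - t| := by rwa [abs_sub_comm] at huv
          have h5 : (0:ℝ) ≤ Mv := le_trans (norm_nonneg _) (hbcl s hs)
          have h6 : (0:ℝ) ≤ |s - t| := abs_nonneg _
          nlinarith [norm_nonneg (γ t - γ s), norm_nonneg (p - γ t), abs_nonneg (v - u),
            abs_nonneg v, K.coe_nonneg]
  rw [hnorm_den]
  rw [div_le_iff₀ (by nlinarith)]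
  rw [Real.coe_toNNReal _ hCnn, hCraw, Real.dist_eq]
  rw [div_mul_eq_mul_div, div_mul_eq_mul_div, le_div_iff₀ (by positivity)]
  calc ‖((γ t - γ s) * (v:ℂ)) + (p - γ t) * ((v : ℂ) - u)‖ * (a/2)^2
      ≤ ((K : ℝ) * |s - t| * t₁ + Mv * |s - t|) * (a/2)^2 := by
        apply mul_le_mul_of_nonneg_right hnum (by positivity)
    _ ≤ ((K:ℝ) * t₁ + Mv) * |s - t| * (u * v) := by
        have h5 : (0:ℝ) ≤ Mv := le_trans (norm_nonneg _) (hbcl s hs)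
        have hle : (a/2)^2 ≤ u * v := by nlinarith
        have : (0:ℝ) ≤ ((K:ℝ) * t₁ + Mv) * |s - t| := by
          have := abs_nonneg (s - t); have := K.coe_nonneg; positivity
        calc ((K : ℝ) * |s - t| * t₁ + Mv * |s - t|) * (a/2)^2
            = (((K:ℝ) * t₁ + Mv) * |s - t|) * ((a/2)^2) := by ring
          _ ≤ (((K:ℝ) * t₁ + Mv) * |s - t|) * (u * v) := by
              apply mul_le_mul_of_nonneg_left hle this
          _ = _ := by ring

lemma avoid (γ : ℝ → ℂ) {t₁ : ℝ} (ht : 0 < t₁) {K : ℝ≥0}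
    (hlip : LipschitzOnWith K γ (Icc 0 t₁)) (hγ0 : γ 0 = 0)
    (F : Set ℂ) (hF : F.Finite) {ρ : ℝ} (hρ : 0 < ρ) :
    ∃ c : ℂ, ‖c‖ < ρ ∧ ∀ t ∈ Ioo 0 t₁, γ t + ((min t (t₁ - t) : ℝ) : ℂ) * c ∉ F := by
  set B : Set ℂ := ⋃ p ∈ F, (fun t => (p - γ t) / ((min t (t₁ - t) : ℝ) : ℂ)) '' (Ioo 0 t₁)
    with hB
  have hdim : dimH B ≤ 1 := by
    rw [hB, dimH_bUnion hF.countable]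
    apply iSup₂_le
    intro p _
    refine le_trans (dimH_image_le_of_locally_lipschitzOn ?_) ?_
    · intro t₀ ht₀
      exact quot_lip γ ht hlip hγ0 p ht₀
    · refine le_trans (dimH_mono (subset_univ _)) ?_
      rw [Real.dimH_univ]
  by_contra hcon
  push_neg at hcon
  have hball : ball (0:ℂ) ρ ⊆ B := by
    intro c hc
    rw [mem_ball, dist_zero_right] at hc
    obtain ⟨t, htm, htF⟩ := hcon c hc
    rw [hB]
    refine mem_biUnion htF ?_
    refine ⟨t, htm, ?_⟩
    have hb0 : ((min t (t₁ - t) : ℝ) : ℂ) ≠ 0 := by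
      simp only [ne_eq, Complex.ofReal_eq_zero]
      have : 0 < min t (t₁ - t) := lt_min htm.1 (by linarith [htm.2])
      linarith
    field_simp
    ring
  have h2 : dimH B = 2 := by
    have : B ∈ nhds (0:ℂ) := Filter.mem_of_superset (ball_mem_nhds _ hρ) hball
    have := Real.dimH_of_mem_nhds this
    rwa [Complex.finrank_real_complex, Nat.cast_ofNat] at this
  rw [h2] at hdim
  norm_num at hdim

lemma stability (φ ψ : ℂ → ℂ) (γ : ℝ → ℂ) {t₁ : ℝ} (ht : 0 ≤ t₁) (hγ0 : γ 0 = 0)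
    (hγc : ContinuousOn γ (Set.Icc 0 t₁))
    (h : ContinuesAlongTo φ γ t₁ ψ) :
    ∃ δ > 0, ∀ γ' : ℝ → ℂ, γ' 0 = 0 → γ' t₁ = γ t₁ →
      (∀ t ∈ Set.Icc 0 t₁, dist (γ' t) (γ t) ≤ δ) → ContinuesAlongTo φ γ' t₁ ψ := by
  classical
  obtain ⟨F, r, hdr, hcompat, h0, h1⟩ := h
  -- Step 1: good open neighborhoods
  have key : ∀ t : ℝ, ∃ U : Set ℝ, IsOpen U ∧ t ∈ U ∧ (t ∈ Set.Icc 0 t₁ →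
      ∀ s ∈ U ∩ Set.Icc 0 t₁,
        Set.EqOn (F s) (F t) (ball (γ s) (r s) ∩ ball (γ t) (r t)) ∧
        dist (γ s) (γ t) < r t / 4) := by
    intro t
    by_cases htI : t ∈ Set.Icc 0 t₁
    · have h1' := hcompat t htI
      have h2' : ∀ᶠ s in nhdsWithin t (Set.Icc 0 t₁), dist (γ s) (γ t) < r t / 4 := by
        exact Metric.tendsto_nhds.mp (hγc t htI).tendsto _ (by have := (hdr t htI).1; linarith)
      have h3' := h1'.and h2'
      rw [eventually_nhdsWithin_iff] at h3'
      obtain ⟨U, hUsub, hUo, hUm⟩ := _root_.eventually_nhds_iff.mp h3'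
      exact ⟨U, hUo, hUm, fun _ s hs => hUsub s hs.1 hs.2⟩
    · exact ⟨Set.univ, isOpen_univ, trivial, fun h => absurd h htI⟩
  choose U hUo hUm hUp using key
  -- Step 2: compactness
  obtain ⟨T, hTsub, hTcov⟩ := isCompact_Icc.elim_nhds_subcover U
    (fun t ht' => (hUo t).mem_nhds (hUm t))
  have hTne : T.Nonempty := by
    by_contra hne
    rw [Finset.not_nonempty_iff_eq_empty] at hne
    have h0m : (0:ℝ) ∈ Set.Icc 0 t₁ := ⟨le_refl 0, ht⟩
    have := hTcov h0m
    simp [hne] at this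
  set ρ0 : ℝ := T.inf' hTne r with hρ0
  have hρ0pos : 0 < ρ0 := by
    obtain ⟨i, hiT, hieq⟩ := Finset.exists_mem_eq_inf' hTne r
    rw [hρ0, hieq]
    exact (hdr i (hTsub i hiT)).1
  have hρ0le : ∀ i ∈ T, ρ0 ≤ r i := fun i hi => Finset.inf'_le r hi
  refine ⟨ρ0 / 4, by linarith, ?_⟩
  intro γ' hγ'0 hγ'e hclose
  -- index function
  have hex : ∀ s ∈ Set.Icc 0 t₁, ∃ i ∈ T, s ∈ U i := by
    intro s hs
    simpa using hTcov hs
  set idx : ℝ → ℝ := fun s => if h : ∃ i ∈ T, s ∈ U i then h.choose else 0 with hidxdef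
  have hidx : ∀ s ∈ Set.Icc 0 t₁, idx s ∈ T ∧ s ∈ U (idx s) := by
    intro s hs
    have he := hex s hs
    simp only [hidxdef, dif_pos he]
    exact ⟨he.choose_spec.1, he.choose_spec.2⟩
  have hidxI : ∀ s ∈ Set.Icc 0 t₁, idx s ∈ Set.Icc 0 t₁ :=
    fun s hs => hTsub _ (hidx s hs).1
  -- distances
  have hdist : ∀ s ∈ Set.Icc 0 t₁, ∀ j ∈ T, s ∈ U j → dist (γ s) (γ j) < r j / 4 := by
    intro s hs j hj hsU
    exact ((hUp j (hTsub j hj)) s ⟨hsU, hs⟩).2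
  have heq1 : ∀ s ∈ Set.Icc 0 t₁, ∀ j ∈ T, s ∈ U j →
      Set.EqOn (F s) (F j) (ball (γ s) (r s) ∩ ball (γ j) (r j)) := by
    intro s hs j hj hsU
    exact ((hUp j (hTsub j hj)) s ⟨hsU, hs⟩).1
  -- the identity-theorem claim
  have claim : ∀ s ∈ Set.Icc 0 t₁, ∀ j ∈ T, s ∈ U j →
      Set.EqOn (F (idx s)) (F j) (ball (γ (idx s)) (r (idx s)) ∩ ball (γ j) (r j)) := by
    intro s hs j hj hsU
    set i := idx s with hi
    have hiT := (hidx s hs).1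
    have hiI := hidxI s hs
    have hjI := hTsub j hj
    have hana_i : AnalyticOnNhd ℂ (F i) (ball (γ i) (r i) ∩ ball (γ j) (r j)) :=
      ((hdr i hiI).2.analyticOnNhd isOpen_ball).mono Set.inter_subset_left
    have hana_j : AnalyticOnNhd ℂ (F j) (ball (γ i) (r i) ∩ ball (γ j) (r j)) :=
      ((hdr j hjI).2.analyticOnNhd isOpen_ball).mono Set.inter_subset_right
    have hpre : IsPreconnected (ball (γ i) (r i) ∩ ball (γ j) (r j)) :=
      ((convex_ball _ _).inter (convex_ball _ _)).isPreconnected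
    have hγsi : dist (γ s) (γ i) < r i / 4 := hdist s hs i hiT (hidx s hs).2
    have hγsj : dist (γ s) (γ j) < r j / 4 := hdist s hs j hj hsU
    have hz₀ : γ s ∈ ball (γ i) (r i) ∩ ball (γ j) (r j) := by
      constructor <;> rw [mem_ball]
      · have := (hdr i hiI).1; linarith
      · have := (hdr j hjI).1; linarith
    have hWopen : IsOpen (ball (γ s) (r s) ∩ ball (γ i) (r i) ∩ ball (γ j) (r j)) :=
      (isOpen_ball.inter isOpen_ball).inter isOpen_ball
    have hz₀W : γ s ∈ ball (γ s) (r s) ∩ ball (γ i) (r i) ∩ ball (γ j) (r j) := by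
      refine ⟨⟨mem_ball_self (hdr s hs).1, ?_⟩, ?_⟩ <;> rw [mem_ball]
      · have := (hdr i hiI).1; linarith
      · have := (hdr j hjI).1; linarith
    have heqW : ∀ z ∈ ball (γ s) (r s) ∩ ball (γ i) (r i) ∩ ball (γ j) (r j),
        F i z = F j z := by
      intro z hz
      have e1 := heq1 s hs i hiT (hidx s hs).2 ⟨hz.1.1, hz.1.2⟩
      have e2 := heq1 s hs j hj hsU ⟨hz.1.1, hz.2⟩
      rw [← e1, e2]
    have hev : F i =ᶠ[nhds (γ s)] F j :=
      Filter.eventuallyEq_of_mem (hWopen.mem_nhds hz₀W) heqW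
    exact hana_i.eqOn_of_preconnected_of_eventuallyEq hana_j hpre hz₀ hev
  -- build the data
  refine ⟨fun t => F (idx t), fun t => r (idx t) / 4, ?_, ?_, ?_, ?_⟩
  · intro t htI
    have hiT := (hidx t htI).1
    have hiI := hidxI t htI
    refine ⟨by linarith [(hdr _ hiI).1], (hdr _ hiI).2.mono ?_⟩
    intro z hz
    rw [mem_ball] at hz ⊢
    have d1 : dist (γ' t) (γ t) ≤ ρ0 / 4 := hclose t htI
    have d2 : dist (γ t) (γ (idx t)) < r (idx t) / 4 := hdist t htI _ hiT (hidx t htI).2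
    have d3 := hρ0le _ hiT
    calc dist z (γ (idx t)) ≤ dist z (γ' t) + dist (γ' t) (γ t) + dist (γ t) (γ (idx t)) :=
          dist_triangle4 _ _ _ _
      _ < r (idx t) := by linarith
  · intro t htI
    have hjT := (hidx t htI).1
    have hUopen : U (idx t) ∈ nhdsWithin t (Set.Icc 0 t₁) :=
      mem_nhdsWithin_of_mem_nhds ((hUo _).mem_nhds (hidx t htI).2)
    filter_upwards [hUopen, self_mem_nhdsWithin] with s hsU hsI
    intro z hz
    have hiT := (hidx s hsI).1
    have hsubset : z ∈ ball (γ (idx s)) (r (idx s)) ∩ ball (γ (idx t)) (r (idx t)) := by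
      obtain ⟨hz1, hz2⟩ := hz
      rw [mem_ball] at hz1 hz2
      have d1 : dist (γ' s) (γ s) ≤ ρ0 / 4 := hclose s hsI
      have d2 : dist (γ s) (γ (idx s)) < r (idx s) / 4 := hdist s hsI _ hiT (hidx s hsI).2
      have d3 := hρ0le _ hiT
      have e1 : dist (γ' t) (γ t) ≤ ρ0 / 4 := hclose t htI
      have e2 : dist (γ t) (γ (idx t)) < r (idx t) / 4 := hdist t htI _ hjT (hidx t htI).2
      have e3 := hρ0le _ hjT
      constructor <;> rw [mem_ball]
      · calc dist z (γ (idx s)) ≤ dist z (γ' s) + dist (γ' s) (γ s) + dist (γ s) (γ (idx s)) :=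
              dist_triangle4 _ _ _ _
          _ < r (idx s) := by linarith
      · calc dist z (γ (idx t)) ≤ dist z (γ' t) + dist (γ' t) (γ t) + dist (γ t) (γ (idx t)) :=
              dist_triangle4 _ _ _ _
          _ < r (idx t) := by linarith
    exact claim s hsI (idx t) hjT hsU hsubset
  · -- start germ
    have h0I : (0:ℝ) ∈ Set.Icc 0 t₁ := ⟨le_refl 0, ht⟩
    have hiT := (hidx 0 h0I).1
    have e0 := heq1 0 h0I (idx 0) hiT (hidx 0 h0I).2
    have hz : (0:ℂ) ∈ ball (γ 0) (r 0) ∩ ball (γ (idx 0)) (r (idx 0)) := by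
      have d2 : dist (γ 0) (γ (idx 0)) < r (idx 0) / 4 := hdist 0 h0I _ hiT (hidx 0 h0I).2
      rw [← hγ0]
      constructor <;> rw [mem_ball]
      · exact mem_ball_self (hdr 0 h0I).1
      · have := (hdr _ (hidxI 0 h0I)).1; linarith
    have hWopen : IsOpen (ball (γ 0) (r 0) ∩ ball (γ (idx 0)) (r (idx 0))) :=
      isOpen_ball.inter isOpen_ball
    filter_upwards [h0, hWopen.mem_nhds hz] with z hz1 hz2
    rw [← e0 hz2, hz1]
  · -- end germ
    have h1I : t₁ ∈ Set.Icc 0 t₁ := ⟨ht, le_refl t₁⟩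
    have hjT := (hidx t₁ h1I).1
    have e0 := heq1 t₁ h1I (idx t₁) hjT (hidx t₁ h1I).2
    have hz : γ t₁ ∈ ball (γ t₁) (r t₁) ∩ ball (γ (idx t₁)) (r (idx t₁)) := by
      have d2 : dist (γ t₁) (γ (idx t₁)) < r (idx t₁) / 4 := hdist t₁ h1I _ hjT (hidx t₁ h1I).2
      constructor <;> rw [mem_ball]
      · exact mem_ball_self (hdr t₁ h1I).1
      · have := (hdr _ (hidxI t₁ h1I)).1; linarith
    have hWopen : IsOpen (ball (γ t₁) (r t₁) ∩ ball (γ (idx t₁)) (r (idx t₁))) :=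
      isOpen_ball.inter isOpen_ball
    rw [hγ'e]
    filter_upwards [h1, hWopen.mem_nhds hz] with z hz1 hz2
    rw [← e0 hz2, hz1]

/-- Path modification lemma: a path of analytic continuation can be modified
to avoid a finite set (except at its endpoints), with an arbitrarily small
increase of length, keeping the same endpoint and the same continuation. -/
theorem path_modification (φ : ℂ → ℂ) (hφ : HolGermAtZero φ)
    (γ : ℝ → ℂ) (t₁ : ℝ) (ht : 0 ≤ t₁) (hγ0 : γ 0 = 0)
    (hlip : ∃ K, LipschitzOnWith K γ (Set.Icc 0 t₁))
    (hcont : ContinuesAlong φ γ t₁)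
    (F : Set ℂ) (hF : F.Finite) (ε : ℝ) (hε : 0 < ε) :
    ∃ γ' : ℝ → ℂ, γ' 0 = 0 ∧ (∃ K, LipschitzOnWith K γ' (Set.Icc 0 t₁)) ∧
      (∀ t ∈ Set.Ioo (0:ℝ) t₁, γ' t ∉ F) ∧
      pathLen γ' t₁ < pathLen γ t₁ + ε ∧
      γ' t₁ = γ t₁ ∧
      ∃ ψ : ℂ → ℂ, ContinuesAlongTo φ γ t₁ ψ ∧ ContinuesAlongTo φ γ' t₁ ψ := by
  classical
  obtain ⟨ψ, hψ⟩ := hcont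
  obtain ⟨K, hK⟩ := hlip
  have hγc : ContinuousOn γ (Set.Icc 0 t₁) := hK.continuousOn
  obtain ⟨δ, hδ, hstab⟩ := stability φ ψ γ ht hγ0 hγc hψ
  rcases eq_or_lt_of_le ht with heq | hlt
  · refine ⟨γ, hγ0, ⟨K, hK⟩, ?_, by linarith, rfl, ψ, hψ, hψ⟩
    intro t htm
    rw [← heq] at htm
    exact absurd htm (by simp)
  · set ρ : ℝ := min (δ / (t₁ + 1)) (ε / (2 * (t₁ + 1))) with hρdef
    have hρpos : 0 < ρ := lt_min (by positivity) (by positivity)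
    obtain ⟨c, hcρ, hcav⟩ := avoid γ hlt hK hγ0 F hF hρpos
    set b : ℝ → ℝ := fun t => min t (t₁ - t) with hbdef
    set γ' : ℝ → ℂ := fun t => γ t + (b t : ℂ) * c with hγ'def
    have hb0 : b 0 = 0 := by simp [hbdef]; linarith
    have hb1 : b t₁ = 0 := by simp [hbdef]; linarith
    have hγ'0 : γ' 0 = 0 := by simp [hγ'def, hb0, hγ0]
    have hγ'e : γ' t₁ = γ t₁ := by simp [hγ'def, hb1]
    have hbub : ∀ t ∈ Set.Icc 0 t₁, 0 ≤ b t ∧ b t ≤ t₁ := by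
      rintro t ⟨h1, h2⟩
      exact ⟨le_min h1 (by linarith), le_trans (min_le_left _ _) h2⟩
    have hblip : LipschitzWith 1 b := by
      have h3 : LipschitzWith 1 (fun x : ℝ => t₁ - x) := by
        apply LipschitzWith.of_dist_le_mul
        intro x y
        rw [Real.dist_eq, Real.dist_eq, show t₁ - x - (t₁ - y) = -(x - y) by ring, abs_neg]
        simp
      simpa using LipschitzWith.id.min h3
    have hpertlip : LipschitzWith ‖c‖₊ (fun t => ((b t : ℝ) : ℂ) * c) := by
      have hmul : LipschitzWith ‖c‖₊ (fun x : ℝ => (x : ℂ) * c) := by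
        apply LipschitzWith.of_dist_le_mul
        intro x y
        rw [dist_eq_norm, Real.dist_eq]
        rw [show (x : ℂ) * c - (y : ℂ) * c = ((x - y : ℝ) : ℂ) * c by push_cast; ring]
        rw [norm_mul, Complex.norm_real, Real.norm_eq_abs]
        rw [coe_nnnorm]
        exact le_of_eq (by ring)
      have h := hmul.comp hblip
      rw [mul_one] at h
      exact h
    have hγ'lip : LipschitzOnWith (K + ‖c‖₊) γ' (Set.Icc 0 t₁) :=
      hK.add (hpertlip.lipschitzOnWith)
    have hclose : ∀ t ∈ Set.Icc 0 t₁, dist (γ' t) (γ t) ≤ δ := by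
      intro t htm
      have h1 : dist (γ' t) (γ t) = b t * ‖c‖ := by
        rw [hγ'def]
        simp only [dist_eq_norm]
        rw [show γ t + (b t : ℂ) * c - γ t = (b t : ℂ) * c by ring]
        rw [norm_mul, Complex.norm_real, Real.norm_eq_abs, abs_of_nonneg (hbub t htm).1]
      rw [h1]
      have h2 := (hbub t htm).2
      have h3 : ρ ≤ δ / (t₁ + 1) := min_le_left _ _
      have h4 : ‖c‖ ≤ δ / (t₁ + 1) := by linarith
      have h5 : b t * ‖c‖ ≤ t₁ * (δ / (t₁ + 1)) := by
        apply mul_le_mul h2 h4 (norm_nonneg c) (by linarith)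
      refine h5.trans ?_
      rw [mul_comm, div_mul_eq_mul_div, div_le_iff₀ (by linarith)]
      nlinarith
    have hlen : pathLen γ' t₁ < pathLen γ t₁ + ε := by
      have hvγ : eVariationOn γ (Set.Icc 0 t₁) ≤ (K : ℝ≥0∞) * ENNReal.ofReal (t₁ - 0) :=
        evar_lip ht hK
      have hvp : eVariationOn (fun t => ((b t : ℝ) : ℂ) * c) (Set.Icc 0 t₁)
          ≤ (‖c‖₊ : ℝ≥0∞) * ENNReal.ofReal (t₁ - 0) :=
        evar_lip ht (hpertlip.lipschitzOnWith)
      have hvγ' : eVariationOn γ' (Set.Icc 0 t₁)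
          ≤ eVariationOn γ (Set.Icc 0 t₁) + (‖c‖₊ : ℝ≥0∞) * ENNReal.ofReal (t₁ - 0) :=
        le_trans (eVariationOn_add_le γ _ _) (add_le_add_right hvp _)
      have hfin : eVariationOn γ (Set.Icc 0 t₁) + (‖c‖₊ : ℝ≥0∞) * ENNReal.ofReal (t₁ - 0) ≠ ⊤ := by
        apply ENNReal.add_ne_top.2
        constructor
        · exact ne_top_of_le_ne_top (by finiteness) hvγ
        · finiteness
      have h6 : pathLen γ' t₁ ≤ pathLen γ t₁ + ‖c‖ * t₁ := by
        rw [pathLen, pathLen]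
        refine le_trans (ENNReal.toReal_mono hfin hvγ') ?_
        rw [ENNReal.toReal_add (ENNReal.add_ne_top.1 hfin).1 (ENNReal.add_ne_top.1 hfin).2]
        rw [ENNReal.toReal_mul, ENNReal.coe_toReal, coe_nnnorm,
          ENNReal.toReal_ofReal (by linarith)]
        rw [sub_zero]
      refine lt_of_le_of_lt h6 ?_
      have h7 : ρ ≤ ε / (2 * (t₁ + 1)) := min_le_right _ _
      have h8 : ‖c‖ * t₁ < ε := by
        have h9 : ‖c‖ * t₁ ≤ (ε / (2 * (t₁ + 1))) * t₁ := by
          apply mul_le_mul_of_nonneg_right (by linarith) hlt.le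
        refine lt_of_le_of_lt h9 ?_
        rw [div_mul_eq_mul_div, div_lt_iff₀ (by linarith)]
        nlinarith
      linarith
    have hres := hstab γ' hγ'0 hγ'e hclose
    refine ⟨γ', hγ'0, ⟨K + ‖c‖₊, hγ'lip⟩, ?_, hlen, hγ'e, ψ, hψ, hres⟩
    intro t htm
    exact hcav t htm
end

section
/- If Ω is a discrete filtered set, then every Ω-continuable holomorphic germ at 0 is endlessly continuable (one may take F_L = Ω̃_L in the definition of endless continuability). -/
open MeasureTheory Metric Set

section Aux

open Filter Topology

/-- Points of the closure of `SingSet` lie in the upper closure. -/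
lemma mem_ucFun_of_mem_closure (Ω : DFS) {p : ℝ × ℂ}
    (hp : p ∈ closure (SingSet Ω.sets)) : 0 ≤ p.1 ∧ p.2 ∈ ucFun Ω.sets p.1 := by
  obtain ⟨u, hu, hlim⟩ := mem_closure_iff_seq_limit.1 hp
  have h1 : Tendsto (fun n => (u n).1) atTop (nhds p.1) :=
    (continuous_fst.tendsto p).comp hlim
  have h2 : Tendsto (fun n => (u n).2) atTop (nhds p.2) :=
    (continuous_snd.tendsto p).comp hlim
  refine ⟨ge_of_tendsto h1 (Eventually.of_forall fun n => (hu n).1), ?_⟩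
  simp only [ucFun, Set.mem_iInter]
  intro ε hε
  have hev : ∀ᶠ n in atTop, (u n).2 ∈ Ω.sets (p.1 + ε) := by
    have : ∀ᶠ n in atTop, (u n).1 < p.1 + ε :=
      h1.eventually_lt_const (by linarith)
    filter_upwards [this] with n hn
    exact Ω.mono hn.le (hu n).2
  exact (Ω.finite (p.1 + ε)).isClosed.mem_of_tendsto h2 hev

lemma zero_not_mem_closure (Ω : DFS) :
    ((0:ℝ), (0:ℂ)) ∉ closure (SingSet Ω.sets) := by
  obtain ⟨δ, hδ, hemp⟩ := Ω.empty_small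
  intro hc
  have hsub : SingSet Ω.sets ⊆ {p : ℝ × ℂ | δ ≤ p.1} := by
    rintro ⟨l, w⟩ ⟨hl, hw⟩
    by_contra hlt
    simp only [Set.mem_setOf_eq, not_le] at hlt
    have : w ∈ Ω.sets δ := Ω.mono (le_of_lt hlt) hw
    simp [hemp] at this
  have hcl : IsClosed {p : ℝ × ℂ | δ ≤ p.1} :=
    isClosed_le continuous_const continuous_fst
  have := closure_minimal hsub hcl hc
  simp at this
  linarith

lemma pathLen_zero (γ : ℝ → ℂ) : pathLen γ 0 = 0 := by
  unfold pathLen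
  rw [Set.Icc_self, eVariationOn.subsingleton γ Set.subsingleton_singleton]
  simp

lemma eVariationOn_lt_top {γ : ℝ → ℂ} {K : NNReal}
    (hK : LipschitzOnWith K γ (Set.Icc 0 1)) :
    eVariationOn γ (Set.Icc (0:ℝ) 1) < ⊤ := by
  have h1 : eVariationOn γ (Set.Icc (0:ℝ) 1) ≤ K * eVariationOn id (Set.Icc (0:ℝ) 1) :=
    hK.comp_eVariationOn_le (Set.mapsTo_id _)
  have h2 : eVariationOn id (Set.Icc (0:ℝ) 1) ≤ ENNReal.ofReal 1 := by
    have := (monotoneOn_id (s := Set.Icc (0:ℝ) 1)).eVariationOn_le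
      (a := 0) (b := 1) (by simp) (by simp)
    simpa using this
  refine lt_of_le_of_lt (h1.trans (mul_le_mul_right h2 _)) ?_
  exact ENNReal.mul_lt_top ENNReal.coe_lt_top ENNReal.ofReal_lt_top

lemma pathLen_mono {γ : ℝ → ℂ} {K : NNReal}
    (hK : LipschitzOnWith K γ (Set.Icc 0 1)) {t : ℝ} (ht : t ∈ Set.Icc (0:ℝ) 1) :
    pathLen γ t ≤ pathLen γ 1 := by
  unfold pathLen
  refine ENNReal.toReal_mono (eVariationOn_lt_top hK).ne ?_
  exact eVariationOn.mono γ (Set.Icc_subset_Icc le_rfl ht.2)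

lemma ucFun_mono_s11 (Ω : DFS) {L₁ L₂ : ℝ} (hL : L₁ ≤ L₂) :
    ucFun Ω.sets L₁ ⊆ ucFun Ω.sets L₂ := by
  intro z hz
  simp only [ucFun, Set.mem_iInter] at hz ⊢
  intro ε hε
  exact Ω.mono (by linarith) (hz ε hε)

/-- The key step: a path avoiding `Ω̃_L` is `Ω`-allowed. -/
lemma allowed_of_avoid (Ω : DFS) {γ : ℝ → ℂ} {L : ℝ}
    (h0 : γ 0 = 0) (hlip : ∃ K, LipschitzOnWith K γ (Set.Icc 0 1))
    (hlen : pathLen γ 1 < L)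
    (havoid : ∀ t ∈ Set.Ioc (0:ℝ) 1, γ t ∉ ucFun Ω.sets L) :
    OmAllowed Ω.sets γ 1 := by
  obtain ⟨K, hK⟩ := hlip
  refine ⟨zero_le_one, h0, ⟨K, hK⟩, ?_⟩
  intro t ht
  rw [MSet, Set.mem_compl_iff]
  intro hc
  rcases eq_or_lt_of_le ht.1 with h0t | h0t
  · rw [← h0t] at hc
    rw [pathLen_zero, h0] at hc
    exact zero_not_mem_closure Ω hc
  · have hmem := (mem_ucFun_of_mem_closure Ω hc).2
    have hle : pathLen γ t ≤ L := le_of_lt (lt_of_le_of_lt (pathLen_mono hK ht) hlen)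
    exact havoid t ⟨h0t, ht.2⟩ (ucFun_mono_s11 Ω hle hmem)

end Aux

/-- Every `Ω`-continuable germ is endlessly continuable; one may take
`F_L = Ω̃_L` in the definition of endless continuability. -/
theorem Om_continuable_endless (Ω : DFS) (φ : ℂ → ℂ)
    (h : OmContinuable Ω.sets φ) :
    EndlesslyContinuable φ ∧
    ∀ L > (0:ℝ), ∀ γ : ℝ → ℂ, γ 0 = 0 →
      (∃ K, LipschitzOnWith K γ (Set.Icc 0 1)) →
      pathLen γ 1 < L → (∀ t ∈ Set.Ioc (0:ℝ) 1, γ t ∉ ucFun Ω.sets L) →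
      ContinuesAlong φ γ 1 := by
  have key : ∀ L > (0:ℝ), ∀ γ : ℝ → ℂ, γ 0 = 0 →
      (∃ K, LipschitzOnWith K γ (Set.Icc 0 1)) →
      pathLen γ 1 < L → (∀ t ∈ Set.Ioc (0:ℝ) 1, γ t ∉ ucFun Ω.sets L) →
      ContinuesAlong φ γ 1 := by
    intro L _ γ h0 hlip hlen havoid
    exact h.2 γ 1 (allowed_of_avoid Ω h0 hlip hlen havoid)
  refine ⟨⟨h.1, ?_⟩, key⟩
  intro L hL
  refine ⟨ucFun Ω.sets L, ?_, fun γ h0 hlip hlen havoid => key L hL γ h0 hlip hlen havoid⟩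
  exact (Ω.finite (L + 1)).subset fun z hz => by
    simpa using Set.mem_iInter.1 (Set.mem_iInter.1 hz 1) one_pos
end

section
/- For a d.f.s. Ω, the space of Ω-continuable germs equals the space of entire functions if and only if for every L > 0 there exists L′ > L such that Ω_{L′} ⊆ { ω ∈ ℂ : |ω| < L }. -/
open MeasureTheory Metric Set

noncomputable section AuxProofs

open Filter Metric Set

namespace ContEntAux

/-- Identity theorem helper. -/
lemma eqOn_of_evEq {f g : ℂ → ℂ} {U : Set ℂ} (hU : IsOpen U) (hconn : IsPreconnected U)
    (hf : DifferentiableOn ℂ f U) (hg : DifferentiableOn ℂ g U) {w : ℂ} (hw : w ∈ U)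
    (h : ∀ᶠ z in nhds w, f z = g z) : Set.EqOn f g U :=
  (hf.analyticOnNhd hU).eqOn_of_preconnected_of_eventuallyEq (hg.analyticOnNhd hU) hconn hw h

/-- Entire germs are always continuable. -/
lemma entire_omContinuable (f : ℝ → Set ℂ) (φ : ℂ → ℂ)
    (h : ∃ g : ℂ → ℂ, Differentiable ℂ g ∧ ∀ᶠ z in nhds 0, φ z = g z) :
    OmContinuable f φ := by
  obtain ⟨g, hg, hφg⟩ := h
  obtain ⟨r0, hr0, hball⟩ := Metric.eventually_nhds_iff_ball.1 hφg
  constructor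
  · exact ⟨r0, hr0, (hg.differentiableOn).congr fun z hz => hball z hz⟩
  · intro γ t₁ _
    exact ⟨g, fun _ => g, fun _ => 1, fun t _ => ⟨one_pos, hg.differentiableOn⟩,
      fun t _ => Filter.Eventually.of_forall (fun s z _ => rfl),
      hφg.mono (fun z hz => hz.symm), Filter.Eventually.of_forall fun z => rfl⟩

variable {Ω : DFS}

lemma mem_sets_of_closure {p : ℝ × ℂ} (hp : p ∈ closure (SingSet Ω.sets)) :
    0 ≤ p.1 ∧ ∀ ε > 0, p.2 ∈ Ω.sets (p.1 + ε) := by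
  obtain ⟨u, hu, hlim⟩ := mem_closure_iff_seq_limit.1 hp
  have h1 : Tendsto (fun n => (u n).1) atTop (nhds p.1) :=
    ((continuous_fst.tendsto p).comp hlim)
  have h2 : Tendsto (fun n => (u n).2) atTop (nhds p.2) :=
    ((continuous_snd.tendsto p).comp hlim)
  constructor
  · exact ge_of_tendsto h1 (Eventually.of_forall fun n => (hu n).1)
  · intro ε hε
    have hev : ∀ᶠ n in atTop, (u n).2 ∈ Ω.sets (p.1 + ε) := by
      have hlt : ∀ᶠ n in atTop, (u n).1 < p.1 + ε :=
        h1.eventually (Filter.Tendsto.eventually_lt_const (by linarith) tendsto_id)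
      exact hlt.mono fun n hn => Ω.mono hn.le (hu n).2
    exact (Ω.finite _).isClosed.mem_of_tendsto h2 hev

lemma closure_singSet_subset
    (hC : ∀ L > (0:ℝ), ∃ L' > L, Ω.sets L' ⊆ {ω : ℂ | ‖ω‖ < L}) :
    closure (SingSet Ω.sets) ⊆ {p : ℝ × ℂ | ‖p.2‖ < p.1} := by
  intro p hp
  obtain ⟨hp1, hp2⟩ := mem_sets_of_closure hp
  obtain ⟨δ, hδ, hδe⟩ := Ω.empty_small
  have hpos : 0 < p.1 := by
    rcases lt_or_ge 0 p.1 with h | h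
    · exact h
    · exfalso
      have h2 := hp2 (δ - p.1) (by linarith)
      have h3 : p.1 + (δ - p.1) = δ := by ring
      rw [h3, hδe] at h2
      exact h2
  obtain ⟨L', hL', hsub⟩ := hC p.1 hpos
  have h2 := hp2 (L' - p.1) (by linarith)
  have h3 : p.1 + (L' - p.1) = L' := by ring
  rw [h3] at h2
  exact hsub h2

lemma lips_rad (ζ : ℂ) : LipschitzWith ‖ζ‖₊ (fun t : ℝ => t • ζ) := by
  apply LipschitzWith.of_dist_le_mul
  intro x y
  rw [dist_eq_norm, ← sub_smul, norm_smul, Real.dist_eq, Real.norm_eq_abs, coe_nnnorm, mul_comm]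

lemma eVar_le {γ : ℝ → ℂ} {K : NNReal} {a b : ℝ} (hK : LipschitzOnWith K γ (Icc a b)) :
    eVariationOn γ (Icc a b) ≤ (K : ENNReal) * ENNReal.ofReal (b - a) := by
  rcases le_or_gt a b with hab | hab
  · have h1 : eVariationOn (γ ∘ id) (Icc a b) ≤ (K : ENNReal) * eVariationOn id (Icc a b) :=
      hK.comp_eVariationOn_le (mapsTo_id _)
    have h2 : eVariationOn (id : ℝ → ℝ) (Icc a b) ≤ ENNReal.ofReal (b - a) := by
      have h3 := (monotoneOn_id (s := Icc a b)).eVariationOn_le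
        (left_mem_Icc.2 hab) (right_mem_Icc.2 hab)
      rwa [inter_self] at h3
    calc eVariationOn γ (Icc a b) = eVariationOn (γ ∘ id) (Icc a b) := rfl
      _ ≤ (K : ENNReal) * eVariationOn id (Icc a b) := h1
      _ ≤ (K : ENNReal) * ENNReal.ofReal (b - a) := by gcongr
  · rw [Icc_eq_empty (by linarith)]
    simp [eVariationOn.subsingleton γ subsingleton_empty]

lemma pathLen_rad (ζ : ℂ) {t : ℝ} (ht : 0 ≤ t) :
    pathLen (fun s : ℝ => s • ζ) t = t * ‖ζ‖ := by
  have habs : ‖ζ‖ = ‖ζ‖ := rfl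
  have hup : eVariationOn (fun s : ℝ => s • ζ) (Icc 0 t) ≤ ENNReal.ofReal (t * ‖ζ‖) := by
    have h := eVar_le ((lips_rad ζ).lipschitzOnWith (s := Icc 0 t))
    calc eVariationOn (fun s : ℝ => s • ζ) (Icc 0 t)
        ≤ (‖ζ‖₊ : ENNReal) * ENNReal.ofReal (t - 0) := h
      _ = ENNReal.ofReal (t * ‖ζ‖) := by
          rw [← ENNReal.ofReal_coe_nnreal, coe_nnnorm, sub_zero,
            ← ENNReal.ofReal_mul (norm_nonneg ζ), mul_comm]
  have hlow : ENNReal.ofReal (t * ‖ζ‖) ≤ eVariationOn (fun s : ℝ => s • ζ) (Icc 0 t) := by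
    have h := eVariationOn.edist_le (fun s : ℝ => s • ζ) (x := 0) (y := t)
      (left_mem_Icc.2 ht) (right_mem_Icc.2 ht)
    have h2 : edist ((0:ℝ) • ζ) (t • ζ) = ENNReal.ofReal (t * ‖ζ‖) := by
      rw [edist_dist, dist_eq_norm]
      congr 1
      rw [zero_smul, zero_sub, norm_neg, norm_smul, Real.norm_eq_abs, abs_of_nonneg ht]
    rwa [h2] at h
  have heq : eVariationOn (fun s : ℝ => s • ζ) (Icc 0 t) = ENNReal.ofReal (t * ‖ζ‖) :=
    le_antisymm hup hlow
  rw [pathLen, heq, ENNReal.toReal_ofReal (by positivity)]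

lemma rad_allowed (hC : ∀ L > (0:ℝ), ∃ L' > L, Ω.sets L' ⊆ {ω : ℂ | ‖ω‖ < L})
    (ζ : ℂ) : OmAllowed Ω.sets (fun t : ℝ => t • ζ) 1 := by
  refine ⟨zero_le_one, by simp, ⟨‖ζ‖₊, (lips_rad ζ).lipschitzOnWith⟩, ?_⟩
  intro t ht
  intro hmem
  have h := closure_singSet_subset hC hmem
  simp only [mem_setOf_eq] at h
  rw [pathLen_rad ζ ht.1] at h
  have habs : ‖t • ζ‖ = t * ‖ζ‖ := by
    rw [norm_smul, Real.norm_eq_abs, abs_of_nonneg ht.1]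
  rw [habs] at h
  exact lt_irrefl _ h

/-- Propagation of agreement with `g` along a radial path. -/
lemma continuation_eq {ρ : ℝ} (hρ : 0 < ρ) (ζ : ℂ) (hζ : ‖ζ‖ = ρ)
    {g φ : ℂ → ℂ} (hg : DifferentiableOn ℂ g (ball 0 ρ)) (hφg : ∀ᶠ z in nhds 0, φ z = g z)
    {F : ℝ → ℂ → ℂ} {r : ℝ → ℝ}
    (hFr : ∀ t ∈ Icc (0:ℝ) 1, 0 < r t ∧ DifferentiableOn ℂ (F t) (ball (t • ζ) (r t)))
    (hcompat : ∀ t ∈ Icc (0:ℝ) 1, ∀ᶠ s in nhdsWithin t (Icc (0:ℝ) 1),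
        Set.EqOn (F s) (F t) (ball (s • ζ) (r s) ∩ ball (t • ζ) (r t)))
    (h0 : ∀ᶠ z in nhds 0, F 0 z = φ z) :
    Set.EqOn (F 1) g (ball ((1:ℝ) • ζ) (r 1) ∩ ball 0 ρ) := by
  have hζ' : ‖ζ‖ = ρ := by exact hζ
  set P : ℝ → Prop := fun t => Set.EqOn (F t) g (ball (t • ζ) (r t) ∩ ball 0 ρ) with hP
  have hnorm : ∀ s : ℝ, 0 ≤ s → ‖s • ζ‖ = s * ρ := by
    intro s hs
    rw [norm_smul, Real.norm_eq_abs, abs_of_nonneg hs, hζ']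
  have hdist : ∀ s t : ℝ, s ≤ t → dist (s • ζ) (t • ζ) = (t - s) * ρ := by
    intro s t hst
    rw [dist_eq_norm, ← sub_smul, norm_smul, Real.norm_eq_abs, hζ',
      abs_of_nonpos (by linarith : s - t ≤ 0), neg_sub]
  -- step0 : eventual agreement at an interior point propagates to the whole lens
  have step0 : ∀ t ∈ Icc (0:ℝ) 1, ∀ w, w ∈ ball (t • ζ) (r t) → w ∈ ball (0:ℂ) ρ →
      (∀ᶠ z in nhds w, F t z = g z) → P t := by
    intro t ht w hw1 hw2 hev
    have hU : IsOpen (ball (t • ζ) (r t) ∩ ball (0:ℂ) ρ) := isOpen_ball.inter isOpen_ball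
    have hconn : IsPreconnected (ball (t • ζ) (r t) ∩ ball (0:ℂ) ρ) :=
      ((convex_ball _ _).inter (convex_ball _ _)).isPreconnected
    exact eqOn_of_evEq hU hconn ((hFr t ht).2.mono inter_subset_left)
      (hg.mono inter_subset_right) ⟨hw1, hw2⟩ hev
  have hP0 : P 0 := by
    refine step0 0 ⟨le_refl 0, zero_le_one⟩ 0 ?_ (mem_ball_self hρ) ?_
    · rw [zero_smul]; exact mem_ball_self (hFr 0 ⟨le_refl 0, zero_le_one⟩).1
    · filter_upwards [h0, hφg] with z h1 h2; rw [h1, h2]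
  -- step : propagation between two parameters with overlapping disks
  have step : ∀ s ∈ Icc (0:ℝ) 1, ∀ t ∈ Icc (0:ℝ) 1, P s →
      (∀ z ∈ ball (s • ζ) (r s) ∩ ball (t • ζ) (r t), F s z = F t z) →
      ∀ w, w ∈ ball (s • ζ) (r s) → w ∈ ball (t • ζ) (r t) → w ∈ ball (0:ℂ) ρ → P t := by
    intro s hs t ht hPs heq w hw1 hw2 hwρ
    refine step0 t ht w hw2 hwρ ?_
    have hO : IsOpen (ball (s • ζ) (r s) ∩ ball (t • ζ) (r t) ∩ ball (0:ℂ) ρ) :=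
      (isOpen_ball.inter isOpen_ball).inter isOpen_ball
    filter_upwards [hO.mem_nhds ⟨⟨hw1, hw2⟩, hwρ⟩] with z hz
    exact (heq z hz.1).symm.trans (hPs ⟨hz.1.1, hz.2⟩)
  -- the set of good parameters
  set T : Set ℝ := {t | t ∈ Icc (0:ℝ) 1 ∧ P t} with hT
  have hT0 : (0:ℝ) ∈ T := ⟨⟨le_refl 0, zero_le_one⟩, hP0⟩
  have hTne : T.Nonempty := ⟨0, hT0⟩
  have hTbdd : BddAbove T := ⟨1, fun x hx => hx.1.2⟩
  set τ := sSup T with hτdef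
  have hτmem : τ ∈ Icc (0:ℝ) 1 := ⟨le_csSup hTbdd hT0, csSup_le hTne fun x hx => hx.1.2⟩
  -- extract a uniform compatibility window at τ
  obtain ⟨ε₁, hε₁, hcw⟩ : ∃ ε > 0, ∀ s ∈ Icc (0:ℝ) 1, dist s τ < ε →
      Set.EqOn (F s) (F τ) (ball (s • ζ) (r s) ∩ ball (τ • ζ) (r τ)) := by
    obtain ⟨ε, he, hh⟩ := Metric.mem_nhdsWithin_iff.1 (hcompat τ hτmem)
    exact ⟨ε, he, fun s hs hd => hh ⟨by simpa [Metric.mem_ball] using hd, hs⟩⟩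
  have hrτ : 0 < r τ := (hFr τ hτmem).1
  set ε₂ : ℝ := r τ / (ρ + 1) with hε₂def
  have hε₂ : 0 < ε₂ := div_pos hrτ (by linarith)
  have hε₂ρ : ε₂ * ρ < r τ := by
    rw [hε₂def, div_mul_eq_mul_div, div_lt_iff₀ (by linarith)]
    nlinarith
  set εm := min ε₁ ε₂ with hεm
  have hεmpos : 0 < εm := lt_min hε₁ hε₂
  -- τ ∈ T
  have hτT : τ ∈ T := by
    obtain ⟨s, hsT, hslt⟩ := exists_lt_of_lt_csSup hTne (by linarith : τ - εm < τ)
    have hsτ : s ≤ τ := le_csSup hTbdd hsT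
    rcases eq_or_lt_of_le hsτ with rfl | hslt2
    · exact hsT
    · have hts : τ - s < εm := by
        have hd : dist s τ < εm := by
          rw [Real.dist_eq, abs_of_nonpos (by linarith)]; linarith
        rw [Real.dist_eq, abs_of_nonpos (by linarith)] at hd; linarith
      have hd : dist s τ < εm := by rw [Real.dist_eq, abs_of_nonpos (by linarith)]; linarith
      have heq := hcw s hsT.1 (lt_of_lt_of_le hd (min_le_left _ _))
      have hs1 : s < 1 := lt_of_lt_of_le hslt2 hτmem.2
      have hsmem : (s • ζ : ℂ) ∈ ball (τ • ζ) (r τ) := by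
        rw [mem_ball, hdist s τ hsτ]
        calc (τ - s) * ρ ≤ εm * ρ := by nlinarith
          _ ≤ ε₂ * ρ := by have := min_le_right ε₁ ε₂; nlinarith
          _ < r τ := hε₂ρ
      refine ⟨hτmem, step s hsT.1 τ hτmem hsT.2 (fun z hz => heq hz) (s • ζ)
        (mem_ball_self (hFr s hsT.1).1) hsmem ?_⟩
      rw [mem_ball, dist_zero_right, hnorm s hsT.1.1]
      nlinarith [hsT.1.1]
  -- τ = 1
  have hτ1 : τ = 1 := by
    by_contra hne
    have hτlt : τ < 1 := lt_of_le_of_ne hτmem.2 hne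
    set s' := min (τ + εm / 2) ((τ + 1) / 2) with hs'
    have hs'1 : s' < 1 := lt_of_le_of_lt (min_le_right _ _) (by linarith)
    have hs'τ : τ < s' := lt_min (by linarith) (by linarith)
    have hs'mem : s' ∈ Icc (0:ℝ) 1 := ⟨le_trans hτmem.1 hs'τ.le, hs'1.le⟩
    have hd : dist s' τ < εm := by
      rw [Real.dist_eq, abs_of_nonneg (by linarith)]
      have : s' ≤ τ + εm / 2 := min_le_left _ _
      linarith
    have heq := hcw s' hs'mem (lt_of_lt_of_le hd (min_le_left _ _))
    have hsmem : (s' • ζ : ℂ) ∈ ball (τ • ζ) (r τ) := by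
      rw [mem_ball, dist_comm, hdist τ s' hs'τ.le]
      have hs'ε : s' - τ < εm := by
        rw [Real.dist_eq, abs_of_nonneg (by linarith)] at hd; linarith
      calc (s' - τ) * ρ ≤ εm * ρ := by nlinarith
        _ ≤ ε₂ * ρ := by have := min_le_right ε₁ ε₂; nlinarith
        _ < r τ := hε₂ρ
    have hPs' : P s' := by
      refine step τ hτmem s' hs'mem hτT.2 (fun z hz => (heq ⟨hz.2, hz.1⟩).symm) (s' • ζ)
        hsmem (mem_ball_self (hFr s' hs'mem).1) ?_
      rw [mem_ball, dist_zero_right, hnorm s' hs'mem.1]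
      nlinarith [hs'mem.1]
    exact absurd (le_csSup hTbdd ⟨hs'mem, hPs'⟩) (not_le.2 hs'τ)
  rw [← hτ1]
  exact hτT.2

/-- Glue local extensions at all boundary points of a disk into an extension
to a strictly larger disk. -/
lemma circle_glue {ρ : ℝ} (hρ : 0 < ρ) {g : ℂ → ℂ} (hg : DifferentiableOn ℂ g (ball 0 ρ))
    (H : ∀ ζ ∈ sphere (0:ℂ) ρ, ∃ (h : ℂ → ℂ) (rr : ℝ), 0 < rr ∧
      DifferentiableOn ℂ h (ball ζ rr) ∧ Set.EqOn h g (ball ζ rr ∩ ball 0 ρ)) :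
    ∃ ρ' > ρ, ∃ G : ℂ → ℂ, DifferentiableOn ℂ G (ball 0 ρ') ∧ Set.EqOn G g (ball 0 ρ) := by
  choose! h rr hrpos hdiff heqn using H
  -- pairwise agreement
  have pair : ∀ ζ ∈ sphere (0:ℂ) ρ, ∀ ζ' ∈ sphere (0:ℂ) ρ,
      Set.EqOn (h ζ) (h ζ') (ball ζ (rr ζ) ∩ ball ζ' (rr ζ')) := by
    intro ζ hζ ζ' hζ'
    rcases eq_or_ne ζ ζ' with rfl | hne
    · intro z _; rfl
    · intro z hz
      have hζn : ‖ζ‖ = ρ := by simpa using mem_sphere_iff_norm.1 hζ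
      have hζ'n : ‖ζ'‖ = ρ := by simpa using mem_sphere_iff_norm.1 hζ'
      set d := dist ζ ζ' with hdd
      have hd : 0 < d := dist_pos.2 hne
      have hover : d < rr ζ + rr ζ' := by
        calc d ≤ dist ζ z + dist z ζ' := dist_triangle _ _ _
          _ < rr ζ + rr ζ' := by
              have h1 : dist z ζ < rr ζ := mem_ball.1 hz.1
              have h2 : dist z ζ' < rr ζ' := mem_ball.1 hz.2
              rw [dist_comm ζ z]
              linarith
      set a := max 0 (d - rr ζ') with ha
      set b := min (rr ζ) d with hb
      have hab : a < b := by
        rw [ha, hb]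
        apply max_lt <;> apply lt_min
        · exact hrpos ζ hζ
        · exact hd
        · linarith
        · linarith [hrpos ζ' hζ']
      set u := (a + b) / 2 with hu
      have hau : a < u := by rw [hu]; linarith
      have hub : u < b := by rw [hu]; linarith
      have hu0 : 0 < u := lt_of_le_of_lt (le_max_left _ _) hau
      have hurr : u < rr ζ := lt_of_lt_of_le hub (min_le_left _ _)
      have hud : u < d := lt_of_lt_of_le hub (min_le_right _ _)
      have hu4 : d - rr ζ' < u := lt_of_le_of_lt (le_max_right _ _) hau
      set p : ℂ := ζ + (u / d) • (ζ' - ζ) with hp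
      have hζ'ζ : ‖ζ' - ζ‖ = d := by rw [hdd, dist_eq_norm, norm_sub_rev]
      have hpζ : dist p ζ = u := by
        rw [hp, dist_eq_norm, add_sub_cancel_left, norm_smul, Real.norm_eq_abs,
          abs_of_nonneg (by positivity), hζ'ζ, div_mul_cancel₀ _ hd.ne']
      have hpζ' : dist p ζ' = d - u := by
        have hexp : p - ζ' = (u / d - 1) • (ζ' - ζ) := by
          rw [hp, sub_smul, one_smul]
          ring_nf
        rw [dist_eq_norm, hexp, norm_smul, Real.norm_eq_abs,
          abs_of_nonpos (by rw [sub_nonpos, div_le_one hd]; exact hud.le), hζ'ζ]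
        field_simp
        ring
      have hpρ : ‖p‖ < ρ := by
        have hcombo : p = (1 - u / d) • ζ + (u / d) • ζ' := by
          rw [hp]; module
        rw [hcombo]
        refine norm_combo_lt_of_ne (le_of_eq hζn) (le_of_eq hζ'n) hne ?_ ?_ (by ring)
        · rw [sub_pos, div_lt_one hd]; exact hud
        · positivity
      have hpmem1 : p ∈ ball ζ (rr ζ) := by rw [mem_ball, hpζ]; exact hurr
      have hpmem2 : p ∈ ball ζ' (rr ζ') := by rw [mem_ball, hpζ']; linarith
      have hpD : p ∈ ball (0:ℂ) ρ := by rw [mem_ball, dist_zero_right]; exact hpρ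
      -- identity theorem on the lens
      have hW : IsOpen (ball ζ (rr ζ) ∩ ball ζ' (rr ζ')) := isOpen_ball.inter isOpen_ball
      have hconn : IsPreconnected (ball ζ (rr ζ) ∩ ball ζ' (rr ζ')) :=
        ((convex_ball _ _).inter (convex_ball _ _)).isPreconnected
      have hO : IsOpen (ball ζ (rr ζ) ∩ ball ζ' (rr ζ') ∩ ball (0:ℂ) ρ) :=
        hW.inter isOpen_ball
      have hev : ∀ᶠ z in nhds p, h ζ z = h ζ' z := by
        filter_upwards [hO.mem_nhds ⟨⟨hpmem1, hpmem2⟩, hpD⟩] with z hz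
        rw [heqn ζ hζ ⟨hz.1.1, hz.2⟩, heqn ζ' hζ' ⟨hz.1.2, hz.2⟩]
      exact eqOn_of_evEq hW hconn ((hdiff ζ hζ).mono inter_subset_left)
        ((hdiff ζ' hζ').mono inter_subset_right) ⟨hpmem1, hpmem2⟩ hev hz
  -- the glued function
  classical
  set G : ℂ → ℂ := fun z =>
    if hz : ∃ ζ', ζ' ∈ sphere (0:ℂ) ρ ∧ z ∈ ball ζ' (rr ζ') then h hz.choose z else g z
    with hGdef
  have hGg : Set.EqOn G g (ball 0 ρ) := by
    intro z hzD
    rw [hGdef]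
    by_cases hz : ∃ ζ', ζ' ∈ sphere (0:ℂ) ρ ∧ z ∈ ball ζ' (rr ζ')
    · simp only [dif_pos hz]
      exact heqn hz.choose hz.choose_spec.1 ⟨hz.choose_spec.2, hzD⟩
    · simp only [dif_neg hz]
  have hGh : ∀ ζ ∈ sphere (0:ℂ) ρ, Set.EqOn G (h ζ) (ball ζ (rr ζ)) := by
    intro ζ hζ z hzB
    have hz : ∃ ζ', ζ' ∈ sphere (0:ℂ) ρ ∧ z ∈ ball ζ' (rr ζ') := ⟨ζ, hζ, hzB⟩
    rw [hGdef]
    simp only [dif_pos hz]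
    exact pair hz.choose hz.choose_spec.1 ζ hζ ⟨hz.choose_spec.2, hzB⟩
  -- the glued domain
  set U : Set ℂ := ball 0 ρ ∪ ⋃ ζ ∈ sphere (0:ℂ) ρ, ball ζ (rr ζ) with hUdef
  have hUopen : IsOpen U := isOpen_ball.union (isOpen_biUnion fun _ _ => isOpen_ball)
  have hGdiff : DifferentiableOn ℂ G U := by
    intro z hz
    rcases hz with hzD | hzU
    · refine (((hg.differentiableAt (isOpen_ball.mem_nhds hzD)).congr_of_eventuallyEq
        ?_).differentiableWithinAt)
      filter_upwards [isOpen_ball.mem_nhds hzD] with w hw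
      exact hGg hw
    · obtain ⟨ζ, hζ, hzB⟩ := mem_iUnion₂.1 hzU
      refine ((((hdiff ζ hζ).differentiableAt (isOpen_ball.mem_nhds hzB)).congr_of_eventuallyEq
        ?_).differentiableWithinAt)
      filter_upwards [isOpen_ball.mem_nhds hzB] with w hw
      exact hGh ζ hζ hw
  have hsub : closedBall (0:ℂ) ρ ⊆ U := by
    intro z hz
    rcases lt_or_eq_of_le (mem_closedBall.1 hz) with hlt | heq
    · exact Or.inl (mem_ball.2 hlt)
    · refine Or.inr (mem_iUnion₂.2 ⟨z, ?_, mem_ball_self (hrpos z ?_)⟩) <;>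
        · rw [mem_sphere]; exact heq
  obtain ⟨ε, hε, hthick⟩ := (isCompact_closedBall (0:ℂ) ρ).exists_thickening_subset_open
    hUopen hsub
  refine ⟨ρ + ε, by linarith, G, ?_, hGg⟩
  refine hGdiff.mono (Subset.trans ?_ hthick)
  intro z hz
  rw [Metric.mem_thickening_iff]
  rcases le_or_gt (‖z‖) ρ with hle | hgt
  · exact ⟨z, mem_closedBall_zero_iff.2 hle, by simpa using hε⟩
  · have hzne : ‖z‖ ≠ 0 := (hρ.trans hgt).ne'
    refine ⟨(ρ / ‖z‖) • z, ?_, ?_⟩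
    · rw [mem_closedBall_zero_iff, norm_smul, Real.norm_eq_abs,
        abs_of_nonneg (by positivity), div_mul_cancel₀ _ hzne]
    · have hzlt : ‖z‖ < ρ + ε := by simpa [mem_ball, dist_zero_right] using hz
      have : dist z ((ρ / ‖z‖) • z) = ‖z‖ - ρ := by
        rw [dist_eq_norm]
        have hexp : z - (ρ / ‖z‖) • z = (1 - ρ / ‖z‖) • z := by module
        rw [hexp, norm_smul, Real.norm_eq_abs, abs_of_nonneg, sub_mul, one_mul,
          div_mul_cancel₀ _ hzne]
        rw [sub_nonneg, div_le_one (by positivity)]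
        exact hgt.le
      rw [this]
      linarith

/-- One strict enlargement of the radius of holomorphy of a continuable germ. -/
lemma main_step (hC : ∀ L > (0:ℝ), ∃ L' > L, Ω.sets L' ⊆ {ω : ℂ | ‖ω‖ < L})
    {φ : ℂ → ℂ} (hφ : OmContinuable Ω.sets φ) {ρ : ℝ} (hρ : 0 < ρ) {g : ℂ → ℂ}
    (hg : DifferentiableOn ℂ g (ball 0 ρ)) (hφg : ∀ᶠ z in nhds 0, φ z = g z) :
    ∃ ρ' > ρ, ∃ g' : ℂ → ℂ, DifferentiableOn ℂ g' (ball 0 ρ') ∧ ∀ᶠ z in nhds 0, φ z = g' z := by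
  have H : ∀ ζ ∈ sphere (0:ℂ) ρ, ∃ (h : ℂ → ℂ) (rr : ℝ), 0 < rr ∧
      DifferentiableOn ℂ h (ball ζ rr) ∧ Set.EqOn h g (ball ζ rr ∩ ball 0 ρ) := by
    intro ζ hζ
    obtain ⟨ψ, F, r, hFr, hcompat, h0, _⟩ := hφ.2 (fun t : ℝ => t • ζ) 1 (rad_allowed hC ζ)
    have habs : ‖ζ‖ = ρ := by
      simpa using mem_sphere_iff_norm.1 hζ
    have h00 : ∀ᶠ z in nhds 0, F 0 z = φ z := by
      have : (fun t : ℝ => t • ζ) 0 = (0:ℂ) := by simp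
      simpa [this] using h0
    have hkey := continuation_eq hρ ζ habs hg hφg hFr hcompat h00
    refine ⟨F 1, r 1, (hFr 1 ⟨zero_le_one, le_refl 1⟩).1, ?_, ?_⟩
    · have := (hFr 1 ⟨zero_le_one, le_refl 1⟩).2
      simpa using this
    · simpa using hkey
  obtain ⟨ρ', hρ', G, hG, hGg⟩ := circle_glue hρ hg H
  refine ⟨ρ', hρ', G, hG, ?_⟩
  filter_upwards [hφg, ball_mem_nhds (0:ℂ) hρ] with z h1 h2
  rw [h1, hGg h2]

/-- Glue holomorphic extensions over all radii `< B` into one on the ball of radius `B`. -/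
lemma glue_radii {φ : ℂ → ℂ} {B : ℝ} (hB : 0 < B)
    (hQ : ∀ s, 0 < s → s < B →
      ∃ g : ℂ → ℂ, DifferentiableOn ℂ g (ball 0 s) ∧ ∀ᶠ z in nhds 0, φ z = g z) :
    ∃ g : ℂ → ℂ, DifferentiableOn ℂ g (ball 0 B) ∧ ∀ᶠ z in nhds 0, φ z = g z := by
  classical
  have hQ' : ∀ s : ℝ, ∃ g : ℂ → ℂ, 0 < s → s < B →
      DifferentiableOn ℂ g (ball 0 s) ∧ ∀ᶠ z in nhds 0, φ z = g z := by
    intro s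
    by_cases hs : 0 < s ∧ s < B
    · obtain ⟨g, h1, h2⟩ := hQ s hs.1 hs.2
      exact ⟨g, fun _ _ => ⟨h1, h2⟩⟩
    · exact ⟨0, fun h1 h2 => absurd ⟨h1, h2⟩ hs⟩
  choose gg hgg using hQ'
  have hco : ∀ s s', 0 < s → s < B → 0 < s' → s' < B →
      Set.EqOn (gg s) (gg s') (ball 0 (min s s')) := by
    intro s s' h1 h2 h3 h4
    have hmin : 0 < min s s' := lt_min h1 h3
    refine eqOn_of_evEq isOpen_ball (convex_ball _ _).isPreconnected
      ((hgg s h1 h2).1.mono (ball_subset_ball (min_le_left _ _)))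
      ((hgg s' h3 h4).1.mono (ball_subset_ball (min_le_right _ _)))
      (mem_ball_self hmin) ?_
    filter_upwards [(hgg s h1 h2).2, (hgg s' h3 h4).2] with z hz1 hz2
    rw [← hz1, hz2]
  set g : ℂ → ℂ := fun z => gg ((‖z‖ + B) / 2) z with hgdef
  have hkey : ∀ z : ℂ, ‖z‖ < B → g z = gg ((‖z‖ + B) / 2) z := fun z _ => rfl
  have hloc : ∀ s, 0 < s → s < B → ∀ z : ℂ, ‖z‖ < s → g z = gg s z := by
    intro s hs1 hs2 z hzs
    rw [hgdef]
    have hz1 : 0 < (‖z‖ + B) / 2 := by positivity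
    have hz2 : (‖z‖ + B) / 2 < B := by
      have : ‖z‖ < B := hzs.trans hs2
      linarith
    refine hco _ s hz1 hz2 hs1 hs2 ?_
    rw [mem_ball, dist_zero_right]
    exact lt_min (by linarith) hzs
  constructor
  constructor
  · intro z₀ hz₀
    rw [mem_ball, dist_zero_right] at hz₀
    set s₀ := (‖z₀‖ + B) / 2 with hs₀
    have hs₀1 : 0 < s₀ := by positivity
    have hs₀2 : s₀ < B := by linarith
    have hz₀s : ‖z₀‖ < s₀ := by rw [hs₀]; linarith
    have hev : ∀ᶠ z in nhds z₀, g z = gg s₀ z := by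
      filter_upwards [Metric.ball_mem_nhds z₀ (by linarith : (0:ℝ) < (s₀ - ‖z₀‖) / 2)]
        with z hz
      have : ‖z‖ < s₀ := by
        have h5 : ‖z - z₀‖ < (s₀ - ‖z₀‖) / 2 := by
          rw [mem_ball, dist_eq_norm] at hz; exact hz
        calc ‖z‖ = ‖z₀ + (z - z₀)‖ := by ring_nf
          _ ≤ ‖z₀‖ + ‖z - z₀‖ := norm_add_le _ _
          _ < s₀ := by linarith
      exact hloc s₀ hs₀1 hs₀2 z this
    have hda : DifferentiableAt ℂ (gg s₀) z₀ :=
      (hgg s₀ hs₀1 hs₀2).1.differentiableAt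
        (isOpen_ball.mem_nhds (by rw [mem_ball, dist_zero_right]; exact hz₀s))
    exact (hda.congr_of_eventuallyEq hev).differentiableWithinAt
  · have h1 : 0 < B / 2 := by linarith
    have h2 : B / 2 < B := by linarith
    filter_upwards [(hgg (B / 2) h1 h2).2,
      Metric.ball_mem_nhds (0:ℂ) (by linarith : (0:ℝ) < B / 4)] with z hz1 hz2
    rw [hz1, ← hloc (B / 2) h1 h2 z ?_]
    rw [mem_ball, dist_zero_right] at hz2
    linarith

/-- Glue holomorphic extensions over all radii into an entire function. -/
lemma glue_all {φ : ℂ → ℂ}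
    (hQ : ∀ s : ℝ, 0 < s →
      ∃ g : ℂ → ℂ, DifferentiableOn ℂ g (ball 0 s) ∧ ∀ᶠ z in nhds 0, φ z = g z) :
    ∃ g : ℂ → ℂ, Differentiable ℂ g ∧ ∀ᶠ z in nhds 0, φ z = g z := by
  classical
  have hQ' : ∀ s : ℝ, ∃ g : ℂ → ℂ, 0 < s →
      DifferentiableOn ℂ g (ball 0 s) ∧ ∀ᶠ z in nhds 0, φ z = g z := by
    intro s
    by_cases hs : 0 < s
    · obtain ⟨g, h1, h2⟩ := hQ s hs
      exact ⟨g, fun _ => ⟨h1, h2⟩⟩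
    · exact ⟨0, fun h1 => absurd h1 hs⟩
  choose gg hgg using hQ'
  have hco : ∀ s s', 0 < s → 0 < s' → Set.EqOn (gg s) (gg s') (ball 0 (min s s')) := by
    intro s s' h1 h3
    have hmin : 0 < min s s' := lt_min h1 h3
    refine eqOn_of_evEq isOpen_ball (convex_ball _ _).isPreconnected
      ((hgg s h1).1.mono (ball_subset_ball (min_le_left _ _)))
      ((hgg s' h3).1.mono (ball_subset_ball (min_le_right _ _)))
      (mem_ball_self hmin) ?_
    filter_upwards [(hgg s h1).2, (hgg s' h3).2] with z hz1 hz2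
    rw [← hz1, hz2]
  set g : ℂ → ℂ := fun z => gg (‖z‖ + 1) z with hgdef
  have hloc : ∀ s, 0 < s → ∀ z : ℂ, ‖z‖ < s → g z = gg s z := by
    intro s hs1 z hzs
    rw [hgdef]
    refine hco _ s (by positivity) hs1 ?_
    rw [mem_ball, dist_zero_right]
    exact lt_min (by linarith) hzs
  constructor
  constructor
  · intro z₀
    set s₀ := ‖z₀‖ + 2 with hs₀
    have hs₀1 : 0 < s₀ := by positivity
    have hz₀s : ‖z₀‖ < s₀ := by rw [hs₀]; linarith
    have hev : ∀ᶠ z in nhds z₀, g z = gg s₀ z := by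
      filter_upwards [Metric.ball_mem_nhds z₀ one_pos] with z hz
      have : ‖z‖ < s₀ := by
        have h5 : ‖z - z₀‖ < 1 := by rw [mem_ball, dist_eq_norm] at hz; exact hz
        calc ‖z‖ = ‖z₀ + (z - z₀)‖ := by ring_nf
          _ ≤ ‖z₀‖ + ‖z - z₀‖ := norm_add_le _ _
          _ < s₀ := by rw [hs₀]; linarith
      exact hloc s₀ hs₀1 z this
    have hda : DifferentiableAt ℂ (gg s₀) z₀ :=
      (hgg s₀ hs₀1).1.differentiableAt
        (isOpen_ball.mem_nhds (by rw [mem_ball, dist_zero_right]; exact hz₀s))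
    exact hda.congr_of_eventuallyEq hev
  · filter_upwards [(hgg 1 one_pos).2,
      Metric.ball_mem_nhds (0:ℂ) (by norm_num : (0:ℝ) < 1 / 2)] with z hz1 hz2
    rw [hz1, ← hloc 1 one_pos z ?_]
    rw [mem_ball, dist_zero_right] at hz2
    linarith

/-- Under the geometric condition, every continuable germ is entire. -/
lemma entire_of_continuable (hC : ∀ L > (0:ℝ), ∃ L' > L, Ω.sets L' ⊆ {ω : ℂ | ‖ω‖ < L})
    {φ : ℂ → ℂ} (hφ : OmContinuable Ω.sets φ) :
    ∃ g : ℂ → ℂ, Differentiable ℂ g ∧ ∀ᶠ z in nhds 0, φ z = g z := by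
  set Q : ℝ → Prop := fun s =>
    ∃ g : ℂ → ℂ, DifferentiableOn ℂ g (ball 0 s) ∧ ∀ᶠ z in nhds 0, φ z = g z with hQdef
  have hQmono : ∀ s s' : ℝ, 0 < s' → s' ≤ s → Q s → Q s' := by
    rintro s s' h1 h2 ⟨g, hg1, hg2⟩
    exact ⟨g, hg1.mono (ball_subset_ball h2), hg2⟩
  obtain ⟨r0, hr0, hr0d⟩ := hφ.1
  have hQr0 : Q r0 := ⟨φ, hr0d, Eventually.of_forall fun _ => rfl⟩
  have hall : ∀ s : ℝ, 0 < s → Q s := by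
    by_contra hcon
    push_neg at hcon
    obtain ⟨s₀, hs₀, hns₀⟩ := hcon
    set A : Set ℝ := {s | 0 < s ∧ Q s} with hA
    have hA0 : r0 ∈ A := ⟨hr0, hQr0⟩
    have hAne : A.Nonempty := ⟨r0, hA0⟩
    have hbdd : BddAbove A := by
      refine ⟨s₀, fun a ha => le_of_not_gt fun hlt => hns₀ ?_⟩
      exact hQmono a s₀ hs₀ hlt.le ha.2
    set τ := sSup A with hτ
    have hτpos : 0 < τ := lt_of_lt_of_le hr0 (le_csSup hbdd hA0)
    have hQτ : Q τ := by
      refine glue_radii hτpos ?_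
      intro s hs1 hs2
      obtain ⟨a, haA, hsa⟩ := exists_lt_of_lt_csSup hAne hs2
      exact hQmono a s hs1 hsa.le haA.2
    obtain ⟨g, hg1, hg2⟩ := hQτ
    obtain ⟨ρ', hρ', g', hg'1, hg'2⟩ := main_step hC hφ hτpos hg1 hg2
    exact absurd (le_csSup hbdd ⟨hτpos.trans hρ', g', hg'1, hg'2⟩) (not_le.2 hρ')
  exact glue_all hall

/-- If the condition fails at `L`, there is a persistent singular point of modulus `≥ L`. -/
lemma exists_persistent {L : ℝ} (hL : 0 < L)
    (hcon : ∀ L' > L, ∃ ω ∈ Ω.sets L', ¬ ‖ω‖ < L) :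
    ∃ ω₀ : ℂ, L ≤ ‖ω₀‖ ∧ ∀ ε > 0, ω₀ ∈ Ω.sets (L + ε) := by
  have hn : ∀ n : ℕ, ∃ ω, ω ∈ Ω.sets (L + 1/(n+1)) ∧ L ≤ ‖ω‖ := by
    intro n
    obtain ⟨ω, h1, h2⟩ := hcon (L + 1/(n+1)) (lt_add_of_pos_right _ (by positivity))
    exact ⟨ω, h1, not_lt.1 h2⟩
  choose w hw1 hw2 using hn
  have hwT : ∀ n, w n ∈ Ω.sets (L + 1) := by
    intro n
    refine Ω.mono ?_ (hw1 n)
    have h3 : 1/((n:ℝ)+1) ≤ 1 := by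
      rw [div_le_one (by positivity)]
      simp [Nat.cast_nonneg]
    linarith
  have : Finite (Ω.sets (L+1)) := (Ω.finite (L+1)).to_subtype
  obtain ⟨b, hb⟩ := Finite.exists_infinite_fiber (fun n : ℕ => (⟨w n, hwT n⟩ : Ω.sets (L+1)))
  have hfib : {n : ℕ | w n = b.1}.Infinite := by
    refine (Set.infinite_coe_iff.1 hb).mono ?_
    intro n hn2
    simp only [mem_preimage, mem_singleton_iff] at hn2
    simpa [Subtype.ext_iff] using hn2
  obtain ⟨n₁, hn₁⟩ := hfib.nonempty
  refine ⟨b.1, by rw [← hn₁]; exact hw2 n₁, ?_⟩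
  intro ε hε
  obtain ⟨n₀, hn₀⟩ := exists_nat_one_div_lt hε
  obtain ⟨m, hm1, hm2⟩ := hfib.exists_gt n₀
  have hmem := hw1 m
  rw [hm1] at hmem
  refine Ω.mono ?_ hmem
  have h4 : 1/((m:ℝ)+1) ≤ 1/((n₀:ℝ)+1) := by
    apply one_div_le_one_div_of_le (by positivity)
    have h5 : (n₀:ℝ) ≤ (m:ℝ) := by exact_mod_cast hm2.le
    linarith
  linarith

/-- The forward direction : the equivalence forces the geometric condition. -/
lemma cond_of_equiv
    (h : ∀ φ : ℂ → ℂ, OmContinuable Ω.sets φ ↔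
      ∃ g : ℂ → ℂ, Differentiable ℂ g ∧ ∀ᶠ z in nhds 0, φ z = g z) :
    ∀ L > (0:ℝ), ∃ L' > L, Ω.sets L' ⊆ {ω : ℂ | ‖ω‖ < L} := by
  intro L hL
  by_contra hcon
  push_neg at hcon
  obtain ⟨ω₀, hω₀L, hω₀⟩ := exists_persistent hL (fun L' hL' => by
    obtain ⟨ω, h1, h2⟩ := Set.not_subset.1 (hcon L' hL')
    exact ⟨ω, h1, h2⟩)
  have habs : L ≤ ‖ω₀‖ := by exact hω₀L
  have hω₀ne : ω₀ ≠ 0 := by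
    intro hzz
    rw [hzz] at habs
    simp at habs
    linarith
  set φ₀ : ℂ → ℂ := fun z => (z - ω₀)⁻¹ with hφ₀def
  have hcont : OmContinuable Ω.sets φ₀ := by
    constructor
    · refine ⟨‖ω₀‖, by linarith, ?_⟩
      intro z hz
      have hzne : z - ω₀ ≠ 0 := by
        rw [sub_ne_zero]
        intro hzz
        rw [mem_ball, dist_zero_right, hzz] at hz
        exact lt_irrefl _ hz
      exact ((differentiableAt_id.sub_const ω₀).inv hzne).differentiableWithinAt
    · intro γ t₁ hγ
      obtain ⟨ht₁, hγ0, ⟨K, hK⟩, hM⟩ := hγ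
      have havoid : ∀ t ∈ Icc (0:ℝ) t₁, γ t ≠ ω₀ := by
        intro t ht heq
        have hfin1 : eVariationOn γ (Icc 0 t₁) ≠ ⊤ :=
          ne_top_of_le_ne_top (ENNReal.mul_ne_top ENNReal.coe_ne_top ENNReal.ofReal_ne_top)
            (eVar_le hK)
        have hfin : eVariationOn γ (Icc 0 t) ≠ ⊤ :=
          ne_top_of_le_ne_top hfin1 (eVariationOn.mono γ (Icc_subset_Icc_right ht.2))
        have hple : L ≤ pathLen γ t := by
          have h1 := eVariationOn.edist_le γ (x := 0) (y := t)
            (left_mem_Icc.2 ht.1) (right_mem_Icc.2 ht.1)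
          have h2 := ENNReal.toReal_mono hfin h1
          rw [← dist_edist, hγ0, heq, dist_zero_left] at h2
          exact le_trans habs h2
        have hpl0 : 0 ≤ pathLen γ t := ENNReal.toReal_nonneg
        have hmem : (pathLen γ t, γ t) ∈ closure (SingSet Ω.sets) := by
          rw [heq]
          have hseq : ∀ n : ℕ, (pathLen γ t + 1/(n+1), ω₀) ∈ SingSet Ω.sets := by
            intro n
            refine ⟨add_nonneg hpl0 (by positivity), ?_⟩
            have hε : (0:ℝ) < pathLen γ t - L + 1/(n+1) := by
              have : (0:ℝ) < 1/((n:ℝ)+1) := by positivity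
              linarith
            have h6 := hω₀ _ hε
            have harr : L + (pathLen γ t - L + 1/(n+1)) = pathLen γ t + 1/(n+1) := by ring
            rwa [harr] at h6
          have hts : Filter.Tendsto (fun n : ℕ => ((pathLen γ t + 1/(n+1) : ℝ), ω₀))
              Filter.atTop (nhds (pathLen γ t, ω₀)) := by
            refine Filter.Tendsto.prodMk_nhds ?_ tendsto_const_nhds
            simpa using
              ((tendsto_const_nhds (x := pathLen γ t)).add tendsto_one_div_add_atTop_nhds_zero_nat)
          exact mem_closure_of_tendsto hts (Eventually.of_forall hseq)
        exact hM t ht hmem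
      refine ⟨φ₀, fun _ => φ₀, fun t => dist (γ t) ω₀, ?_, ?_, ?_, ?_⟩
      · intro t ht
        refine ⟨dist_pos.2 (havoid t ht), ?_⟩
        intro z hz
        have hzne : z - ω₀ ≠ 0 := by
          rw [sub_ne_zero]
          intro hzz
          rw [hzz, mem_ball, dist_comm] at hz
          exact lt_irrefl _ hz
        exact ((differentiableAt_id.sub_const ω₀).inv hzne).differentiableWithinAt
      · exact fun t ht => Eventually.of_forall fun s z _ => rfl
      · exact Eventually.of_forall fun z => rfl
      · exact Eventually.of_forall fun z => rfl
  obtain ⟨g, hgdiff, hgeq⟩ := (h φ₀).1 hcont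
  have hent : Set.EqOn (fun z => g z * (z - ω₀)) (fun _ => (1:ℂ)) univ := by
    refine eqOn_of_evEq isOpen_univ isPreconnected_univ
      ((hgdiff.mul ((differentiable_id.sub_const ω₀))).differentiableOn)
      (differentiable_const 1).differentiableOn (mem_univ 0) ?_
    have hne0 : ∀ᶠ z : ℂ in nhds 0, z ≠ ω₀ := eventually_ne_nhds (Ne.symm hω₀ne)
    filter_upwards [hgeq, hne0] with z h1 h2
    rw [← h1]
    exact inv_mul_cancel₀ (sub_ne_zero.2 h2)
  have hbad := hent (mem_univ ω₀)
  simp only [sub_self, mul_zero] at hbad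
  exact zero_ne_one hbad

end ContEntAux

end AuxProofs

/-- The space of `Ω`-continuable germs equals the space of (germs of) entire
functions iff for every `L > 0` there is `L' > L` with `Ω_{L'} ⊆ {|ω| < L}`. -/
theorem continuable_eq_entire_iff (Ω : DFS) :
    (∀ φ : ℂ → ℂ, OmContinuable Ω.sets φ ↔
      ∃ g : ℂ → ℂ, Differentiable ℂ g ∧ ∀ᶠ z in nhds 0, φ z = g z) ↔
    (∀ L > (0:ℝ), ∃ L' > L, Ω.sets L' ⊆ {ω : ℂ | ‖ω‖ < L}) := by
  constructor
  · exact ContEntAux.cond_of_equiv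
  · intro hC φ
    constructor
    · exact ContEntAux.entire_of_continuable hC
    · exact ContEntAux.entire_omContinuable Ω.sets φ
end

section
/- There exist closed discrete subsets Σ, Σ′ of ℂ such that the sumset { ω′ + ω″ : ω′ ∈ Σ, ω″ ∈ Σ′ } is not closed and discrete in ℂ; e.g. Σ = Σ′ = (ℤ_{>0}·√2) ∪ ℤ_{<0} has this property. Consequently Ω(Σ) * Ω(Σ′) ≠ Ω(Σ″) for every closed discrete Σ″. -/
open MeasureTheory Metric Set

section Aux

open Filter

private lemma sqrt2_gt_one : (1:ℝ) < Real.sqrt 2 := by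
  have h := Real.sq_sqrt (by norm_num : (0:ℝ) ≤ 2)
  nlinarith [Real.sqrt_nonneg 2]

private lemma sqrt2_lt_two : Real.sqrt 2 < 2 := by
  have h := Real.sq_sqrt (by norm_num : (0:ℝ) ≤ 2)
  nlinarith [Real.sqrt_nonneg 2]

/-- Recursive integers with `(k_j+1)√2 - (m_j+1) = (√2-1)^(2j+1)`. -/
private def km : ℕ → ℕ × ℕ
  | 0 => (0, 0)
  | j + 1 => (3 * (km j).1 + 2 * (km j).2 + 4, 4 * (km j).1 + 3 * (km j).2 + 6)

private lemma km_eq (j : ℕ) :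
    (((km j).1 : ℝ) + 1) * Real.sqrt 2 - (((km j).2 : ℝ) + 1)
      = (Real.sqrt 2 - 1) ^ (2 * j + 1) := by
  induction j with
  | zero => simp [km]
  | succ j ih =>
    have hs : Real.sqrt 2 ^ 2 = 2 := Real.sq_sqrt (by norm_num)
    have hpow : (Real.sqrt 2 - 1) ^ (2 * (j+1) + 1)
        = (Real.sqrt 2 - 1) ^ (2 * j + 1) * (Real.sqrt 2 - 1) ^ 2 := by ring
    rw [hpow, ← ih, km]
    push_cast
    linear_combination (2 * (((km j).1 : ℝ) + 1)
      - ((((km j).1 : ℝ) + 1) * Real.sqrt 2 - (((km j).2 : ℝ) + 1))) * hs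

private lemma xR_pos (j : ℕ) : 0 < (Real.sqrt 2 - 1) ^ (2 * j + 1) :=
  pow_pos (by linarith [sqrt2_gt_one]) _

private lemma xR_tendsto :
    Tendsto (fun j : ℕ => (Real.sqrt 2 - 1) ^ (2 * j + 1)) atTop (nhds 0) := by
  have h1 : Tendsto (fun n : ℕ => (Real.sqrt 2 - 1) ^ n) atTop (nhds 0) :=
    tendsto_pow_atTop_nhds_zero_of_lt_one (by linarith [sqrt2_gt_one])
      (by linarith [sqrt2_lt_two])
  exact h1.comp (tendsto_atTop_atTop.2 fun b => ⟨b, fun a ha => by omega⟩)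

/-- If a point in the closure has a finite neighborhood-trace, it is in the set. -/
private lemma mem_of_closure_locfin {A : Set ℂ} {x : ℂ}
    (hfin : (A ∩ Metric.closedBall x 1).Finite) (hx : x ∈ closure A) : x ∈ A := by
  have hsub : A ⊆ (A ∩ Metric.closedBall x 1) ∪ (A \ Metric.ball x 1) := by
    intro y hy
    by_cases h : y ∈ Metric.ball x 1
    · exact Or.inl ⟨hy, Metric.ball_subset_closedBall h⟩
    · exact Or.inr ⟨hy, h⟩
  have hx2 := closure_mono hsub hx
  rw [closure_union] at hx2
  rcases hx2 with h | h
  · exact (hfin.isClosed.closure_eq ▸ h).1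
  · exfalso
    rcases mem_closure_iff.1 h (Metric.ball x 1) Metric.isOpen_ball
      (Metric.mem_ball_self one_pos) with ⟨y, hy1, hy2⟩
    exact hy2.2 hy1

private lemma S_locfin (x : ℂ) :
    ((Set.range (fun n : ℕ => ((n : ℂ) + 1) * (Real.sqrt 2 : ℂ)) ∪
      Set.range (fun n : ℕ => -((n : ℂ) + 1))) ∩ Metric.closedBall x 1).Finite := by
  set N := ⌈‖x‖ + 1⌉₊ with hN
  have hIio : (Set.Iio N).Finite := Set.finite_Iio N
  apply Set.Finite.subset
    ((hIio.image (fun n : ℕ => ((n : ℂ) + 1) * (Real.sqrt 2 : ℂ))).union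
      (hIio.image (fun n : ℕ => -((n : ℂ) + 1))))
  rintro y ⟨hyS, hyB⟩
  have hnorm : ‖y‖ ≤ ‖x‖ + 1 := by
    have hd : dist y x ≤ 1 := Metric.mem_closedBall.1 hyB
    have := norm_sub_norm_le y x
    rw [dist_eq_norm] at hd
    linarith
  rcases hyS with ⟨n, rfl⟩ | ⟨n, rfl⟩ <;> beta_reduce at hnorm
  · left
    refine ⟨n, ?_, rfl⟩
    have hcast : ((n : ℂ) + 1) * (Real.sqrt 2 : ℂ)
        = ((((n : ℝ) + 1) * Real.sqrt 2 : ℝ) : ℂ) := by push_cast; ring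
    rw [hcast, Complex.norm_real, Real.norm_eq_abs,
      abs_of_nonneg (by positivity)] at hnorm
    have h1 : ((n : ℝ) + 1) ≤ ((n : ℝ) + 1) * Real.sqrt 2 := by
      nlinarith [sqrt2_gt_one, Nat.cast_nonneg (α := ℝ) n]
    exact Nat.lt_ceil.2 (by linarith)
  · right
    refine ⟨n, ?_, rfl⟩
    have hcast : -((n : ℂ) + 1) = ((-((n : ℝ) + 1) : ℝ) : ℂ) := by push_cast; ring
    rw [hcast, Complex.norm_real, Real.norm_eq_abs, abs_neg,
      abs_of_nonneg (by positivity)] at hnorm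
    exact Nat.lt_ceil.2 (by linarith)

end Aux

/-- A counterexample: `Σ = Σ' = ℤ_{>0}√2 ∪ ℤ_{<0}` is closed and discrete but
its sumset is not, and `Ω(Σ) * Ω(Σ')` is not of the form `Ω(Σ'')` for any
closed discrete `Σ''`. -/
theorem sum_dfs_counterexample :
    ∃ S : Set ℂ,
      S = Set.range (fun n : ℕ => ((n : ℂ) + 1) * (Real.sqrt 2 : ℂ)) ∪
          Set.range (fun n : ℕ => -((n : ℂ) + 1)) ∧
      IsClosed S ∧ (∀ x ∈ S, ¬ AccPt x (Filter.principal S)) ∧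
      ¬ (IsClosed (Set.image2 (· + ·) S S) ∧
          ∀ x ∈ Set.image2 (· + ·) S S,
            ¬ AccPt x (Filter.principal (Set.image2 (· + ·) S S))) ∧
      ∀ T : Set ℂ, IsClosed T → (∀ x ∈ T, ¬ AccPt x (Filter.principal T)) →
        sumFun (omOf S) (omOf S) ≠ omOf T := by
  classical
  set S : Set ℂ := Set.range (fun n : ℕ => ((n : ℂ) + 1) * (Real.sqrt 2 : ℂ)) ∪
      Set.range (fun n : ℕ => -((n : ℂ) + 1)) with hS
  refine ⟨S, rfl, ?_, ?_, ?_, ?_⟩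
  · -- S is closed
    exact isClosed_of_closure_subset fun x hx => mem_of_closure_locfin (S_locfin x) hx
  · -- S is discrete
    intro x hx hacc
    have hfreq := accPt_iff_frequently.1 hacc
    have hcl : x ∈ closure (S \ {x}) :=
      mem_closure_iff_frequently.2 (hfreq.mono fun y hy => ⟨hy.2, hy.1⟩)
    have hmem : x ∈ S \ {x} :=
      mem_of_closure_locfin ((S_locfin x).subset
        (Set.inter_subset_inter_left _ Set.diff_subset)) hcl
    exact hmem.2 rfl
  · -- sumset is not closed-and-discrete
    rintro ⟨hclosed, -⟩
    -- the approximating sequence in the sumset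
    have hmem : ∀ j : ℕ, ((((Real.sqrt 2 - 1) ^ (2 * j + 1) : ℝ)) : ℂ)
        ∈ Set.image2 (· + ·) S S := by
      intro j
      have h : (((km j).1 : ℂ) + 1) * (Real.sqrt 2 : ℂ) + -(((km j).2 : ℂ) + 1)
          ∈ Set.image2 (· + ·) S S :=
        Set.mem_image2_of_mem (Or.inl ⟨(km j).1, rfl⟩) (Or.inr ⟨(km j).2, rfl⟩)
      have heq : (((km j).1 : ℂ) + 1) * (Real.sqrt 2 : ℂ) + -(((km j).2 : ℂ) + 1)
          = ((((Real.sqrt 2 - 1) ^ (2 * j + 1) : ℝ)) : ℂ) := by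
        rw [← km_eq]; push_cast; ring
      rwa [heq] at h
    have htend : Filter.Tendsto
        (fun j : ℕ => ((((Real.sqrt 2 - 1) ^ (2 * j + 1) : ℝ)) : ℂ))
        Filter.atTop (nhds 0) := by
      have h := (Complex.continuous_ofReal.tendsto 0).comp xR_tendsto
      rw [Complex.ofReal_zero] at h
      exact h
    have h0 : (0 : ℂ) ∈ Set.image2 (· + ·) S S := by
      rw [← hclosed.closure_eq]
      exact mem_closure_of_tendsto htend (Filter.Eventually.of_forall hmem)
    -- but 0 is not in the sumset
    rcases h0 with ⟨a, ha, b, hb, hab⟩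
    have hirr := irrational_sqrt_two
    rcases ha with ⟨k, rfl⟩ | ⟨k, rfl⟩ <;> rcases hb with ⟨l, rfl⟩ | ⟨l, rfl⟩
    · have : ((((k : ℝ) + 1) * Real.sqrt 2 + ((l : ℝ) + 1) * Real.sqrt 2 : ℝ) : ℂ)
          = 0 := by push_cast at hab ⊢; linear_combination hab
      rw [Complex.ofReal_eq_zero] at this
      nlinarith [sqrt2_gt_one, Nat.cast_nonneg (α := ℝ) k, Nat.cast_nonneg (α := ℝ) l]
    · have hr : ((((k : ℝ) + 1) * Real.sqrt 2 - ((l : ℝ) + 1) : ℝ) : ℂ) = 0 := by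
        push_cast at hab ⊢; linear_combination hab
      rw [Complex.ofReal_eq_zero] at hr
      refine hirr ⟨((l : ℚ) + 1) / ((k : ℚ) + 1), ?_⟩
      have hk : ((k : ℝ) + 1) ≠ 0 := by positivity
      push_cast
      field_simp
      linarith [hr]
    · have hr : ((((l : ℝ) + 1) * Real.sqrt 2 - ((k : ℝ) + 1) : ℝ) : ℂ) = 0 := by
        push_cast at hab ⊢; linear_combination hab
      rw [Complex.ofReal_eq_zero] at hr
      refine hirr ⟨((k : ℚ) + 1) / ((l : ℚ) + 1), ?_⟩
      have hl : ((l : ℝ) + 1) ≠ 0 := by positivity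
      push_cast
      field_simp
      linarith [hr]
    · have : (((-((k : ℝ) + 1) - ((l : ℝ) + 1)) : ℝ) : ℂ) = 0 := by
        push_cast at hab ⊢; linear_combination hab
      rw [Complex.ofReal_eq_zero] at this
      nlinarith [Nat.cast_nonneg (α := ℝ) k, Nat.cast_nonneg (α := ℝ) l]
  · -- the sum of d.f.s. is not the d.f.s. of a closed discrete set
    intro T hTclosed hTdisc heq
    have hmem : ∀ j : ℕ, ((((Real.sqrt 2 - 1) ^ (2 * j + 1) : ℝ)) : ℂ) ∈ T := by
      intro j
      set k := (km j).1
      set m := (km j).2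
      have h1 : (((k : ℂ) + 1) * (Real.sqrt 2 : ℂ)) ∈
          omOf S (((k : ℝ) + 1) * Real.sqrt 2) := by
        refine ⟨Or.inl ⟨k, rfl⟩, ?_⟩
        have hcast : ((k : ℂ) + 1) * (Real.sqrt 2 : ℂ)
            = ((((k : ℝ) + 1) * Real.sqrt 2 : ℝ) : ℂ) := by push_cast; ring
        rw [hcast, Complex.norm_real, Real.norm_eq_abs, abs_of_nonneg (by positivity)]
      have h2 : (-((m : ℂ) + 1)) ∈ omOf S ((m : ℝ) + 1) := by
        refine ⟨Or.inr ⟨m, rfl⟩, ?_⟩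
        have hcast : -((m : ℂ) + 1) = ((-((m : ℝ) + 1) : ℝ) : ℂ) := by push_cast; ring
        rw [hcast, Complex.norm_real, Real.norm_eq_abs, abs_neg, abs_of_nonneg (by positivity)]
      have hsum : ((((Real.sqrt 2 - 1) ^ (2 * j + 1) : ℝ)) : ℂ) ∈
          sumFun (omOf S) (omOf S) (((k : ℝ) + 1) * Real.sqrt 2 + ((m : ℝ) + 1)) := by
        refine Or.inl (Or.inl ⟨((k : ℝ) + 1) * Real.sqrt 2, (m : ℝ) + 1,
          by positivity, by positivity, rfl,
          ((k : ℂ) + 1) * (Real.sqrt 2 : ℂ), h1, -((m : ℂ) + 1), h2, ?_⟩)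
        rw [← km_eq]; push_cast; ring
      rw [heq] at hsum
      exact hsum.1
    have htend : Filter.Tendsto
        (fun j : ℕ => ((((Real.sqrt 2 - 1) ^ (2 * j + 1) : ℝ)) : ℂ))
        Filter.atTop (nhds 0) := by
      have h := (Complex.continuous_ofReal.tendsto 0).comp xR_tendsto
      rw [Complex.ofReal_zero] at h
      exact h
    have h0 : (0 : ℂ) ∈ T := by
      rw [← hTclosed.closure_eq]
      exact mem_closure_of_tendsto htend (Filter.Eventually.of_forall hmem)
    refine hTdisc 0 h0 (accPt_iff_nhds.2 fun U hU => ?_)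
    obtain ⟨j, hj⟩ :=
      (htend.eventually (Filter.eventually_of_mem hU fun y hy => hy)).exists
    refine ⟨((((Real.sqrt 2 - 1) ^ (2 * j + 1) : ℝ)) : ℂ), ⟨hj, hmem j⟩, ?_⟩
    rw [Ne, Complex.ofReal_eq_zero]
    exact (xR_pos j).ne'
end

section
/- (Key Gronwall estimate for the convolution flow.) Let δ ∈ (0,ρ), let Ω be a d.f.s. equal to its upper closure with Ω_{3ρ} = ∅, let n ≥ 1, and let γ ∈ Π^{δ,L}_{Ω^{*n}}. Define η(v) := dist(v, {(0,0)} ∪ S_Ω) and D(t, v⃗) := η(v₁)+⋯+η(v_n) + |γ̃(t) − (v₁+⋯+v_n)| for v⃗ ∈ (ℝ×ℂ)ⁿ, where γ̃(t) = (L(γ|_{[0,t]}), γ(t)). Then D(t, v⃗) ≥ δ for all t ∈ [a,1] and all v⃗ ∈ (ℝ×ℂ)ⁿ. -/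
open MeasureTheory Metric Set

section AuxProof

lemma eucNorm_eq_norm (p : ℝ × ℂ) :
    eucNorm p = ‖(WithLp.equiv 2 (ℝ × ℂ)).symm p‖ := by
  simp [eucNorm, WithLp.prod_norm_eq_of_L2, Real.norm_eq_abs, sq_abs]

lemma eucNorm_add_le (x y : ℝ × ℂ) : eucNorm (x + y) ≤ eucNorm x + eucNorm y := by
  simp only [eucNorm_eq_norm]
  exact norm_add_le _ _

lemma eucNorm_sum_le {n : ℕ} (x : Fin n → ℝ × ℂ) :
    eucNorm (∑ j, x j) ≤ ∑ j, eucNorm (x j) := by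
  simp only [eucNorm_eq_norm]
  rw [show (WithLp.equiv 2 (ℝ × ℂ)).symm (∑ j, x j)
      = ∑ j, (WithLp.equiv 2 (ℝ × ℂ)).symm (x j) from WithLp.toLp_sum (p := 2) (s := Finset.univ) (f := x)]
  exact norm_sum_le _ _

lemma singSet_iterSum_succ (f : ℝ → Set ℂ) (m : ℕ) :
    SingSet (iterSum f m) ⊆ SingSet (iterSum f (m + 1)) := by
  rintro ⟨L, z⟩ ⟨hL, hz⟩
  exact ⟨hL, Or.inl (Or.inr hz)⟩

lemma singSet_subset_iterSum (f : ℝ → Set ℂ) (m : ℕ) :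
    SingSet f ⊆ SingSet (iterSum f m) := by
  induction m with
  | zero => exact fun p hp => hp
  | succ m ih => exact fun p hp => singSet_iterSum_succ f m (ih hp)

lemma singSet_add_mem (f : ℝ → Set ℂ) (m : ℕ) {x y : ℝ × ℂ}
    (hx : x ∈ SingSet (iterSum f m)) (hy : y ∈ SingSet f) :
    x + y ∈ SingSet (iterSum f (m + 1)) := by
  refine ⟨add_nonneg hx.1 hy.1, Or.inl (Or.inl ?_)⟩
  exact ⟨x.1, y.1, hx.1, hy.1, rfl, x.2, hx.2, y.2, hy.2, rfl⟩

lemma sum_mem_singSet_iterSum (f : ℝ → Set ℂ) :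
    ∀ m (p : Fin (m + 1) → ℝ × ℂ),
      (∀ j, p j = 0 ∨ p j ∈ SingSet f) →
      (∑ j, p j) = 0 ∨ (∑ j, p j) ∈ SingSet (iterSum f m) := by
  intro m
  induction m with
  | zero =>
    intro p hp
    simpa [iterSum] using hp 0
  | succ m ih =>
    intro p hp
    rw [Fin.sum_univ_castSucc]
    rcases ih (fun i => p i.castSucc) (fun i => hp _) with h | h
    · rcases hp (Fin.last (m + 1)) with h' | h'
      · left; rw [h, h', add_zero]
      · right; rw [h, zero_add]; exact singSet_subset_iterSum f (m + 1) h'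
    · rcases hp (Fin.last (m + 1)) with h' | h'
      · right; rw [h', add_zero]; exact singSet_iterSum_succ f m h
      · right; exact singSet_add_mem f m h h'

lemma eta_exists (f : ℝ → Set ℂ) (v : ℝ × ℂ) {ε : ℝ} (hε : 0 < ε) :
    ∃ p ∈ ({((0:ℝ), (0:ℂ))} ∪ SingSet f), eucDist v p < etaFun f v + ε := by
  have hne : (eucDist v '' ({((0:ℝ), (0:ℂ))} ∪ SingSet f)).Nonempty :=
    ⟨eucDist v ((0:ℝ), (0:ℂ)), Set.mem_image_of_mem _ (Or.inl rfl)⟩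
  obtain ⟨d, hd, hlt⟩ := Real.lt_sInf_add_pos hne hε
  obtain ⟨p, hp, rfl⟩ := hd
  exact ⟨p, hp, hlt⟩

end AuxProof

/-- Lower bound `D ≥ δ` for the function `D` used in the construction of the
deformation vector field. -/
theorem DFun_lower_bound (ρ δ Lb : ℝ) (hδ : 0 < δ) (hδρ : δ < ρ)
    (Ω : DFS) (huc : ucFun Ω.sets = Ω.sets) (hρ : Ω.sets (3 * ρ) = ∅)
    (n : ℕ) (hn : 1 ≤ n)
    (γ : ℝ → ℂ) (hγ0 : γ 0 = 0)
    (hlip : ∃ K, LipschitzOnWith K γ (Set.Icc 0 1))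
    (a : ℝ) (ha : 0 < a) (ha1 : a < 1)
    (hseg : ∀ t ∈ Set.Icc 0 a, γ t = (t / a) • γ a)
    (hρa : ‖γ a‖ = ρ)
    (hPi : ∀ t ∈ Set.Icc (0:ℝ) 1,
      (∀ q ∈ SingSet (iterSum Ω.sets (n - 1)),
        δ ≤ eucDist (pathLen γ t, γ t) q) ∧ pathLen γ t ≤ Lb) :
    ∀ t ∈ Set.Icc a 1, ∀ v : Fin n → ℝ × ℂ,
      δ ≤ DFun Ω.sets n (pathLen γ t, γ t) v := by
  obtain ⟨m, rfl⟩ : ∃ m, n = m + 1 := ⟨n - 1, (Nat.succ_pred_eq_of_pos hn).symm⟩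
  simp only [Nat.add_sub_cancel] at hPi
  obtain ⟨K, hK⟩ := hlip
  intro t ht v
  have ht01 : t ∈ Set.Icc (0:ℝ) 1 := ⟨le_trans ha.le ht.1, ht.2⟩
  -- the variation of γ on [0,t] is finite
  have hfin : eVariationOn γ (Set.Icc 0 t) ≠ ⊤ := by
    have h1 : eVariationOn γ (Set.Icc (0:ℝ) 1) ≠ ⊤ := by
      have := hK.locallyBoundedVariationOn 0 1 (by constructor <;> norm_num)
        (by constructor <;> norm_num)
      simpa [BoundedVariationOn, Set.inter_eq_left.mpr (Set.Icc_subset_Icc_right le_rfl)]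
        using this
    intro h
    exact h1 (top_le_iff.mp (h ▸ eVariationOn.mono γ (Set.Icc_subset_Icc_right ht.2)))
  -- pathLen γ t ≥ ρ
  have hρt : ρ ≤ pathLen γ t := by
    have hmem0 : (0:ℝ) ∈ Set.Icc 0 t := ⟨le_rfl, le_trans ha.le ht.1⟩
    have hmema : a ∈ Set.Icc 0 t := ⟨ha.le, ht.1⟩
    have hle := eVariationOn.edist_le γ hmem0 hmema
    have h2 : ρ = (edist (γ 0) (γ a)).toReal := by
      rw [edist_dist, hγ0, dist_comm, Complex.dist_eq, sub_zero, hρa,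
        ENNReal.toReal_ofReal (by linarith)]
    rw [h2]
    exact ENNReal.toReal_mono hfin hle
  set w : ℝ × ℂ := (pathLen γ t, γ t) with hwdef
  -- distance from w to the relevant singular points is ≥ δ
  have hkey : ∀ q : ℝ × ℂ, (q = 0 ∨ q ∈ SingSet (iterSum Ω.sets m)) →
      δ ≤ eucDist w q := by
    rintro q (rfl | hq)
    · have h1 : eucDist w 0 = eucNorm w := by rw [eucDist, sub_zero]
      have h2 : pathLen γ t ≤ eucNorm w := by
        rw [hwdef, eucNorm]
        calc pathLen γ t = Real.sqrt ((pathLen γ t) ^ 2) :=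
              (Real.sqrt_sq (by linarith)).symm
          _ ≤ Real.sqrt ((pathLen γ t) ^ 2 + ‖γ t‖ ^ 2) :=
              Real.sqrt_le_sqrt (le_add_of_nonneg_right (by positivity))
      rw [h1]
      linarith [h2]
    · exact (hPi t ht01).1 q hq
  -- ε-approximation argument
  refine le_of_forall_pos_le_add ?_
  intro ε hε
  have hn' : (0:ℝ) < (m + 1 : ℕ) := by exact_mod_cast Nat.succ_pos m
  have hεn : 0 < ε / (m + 1 : ℕ) := div_pos hε hn'
  choose p hpmem hpd using fun j => eta_exists Ω.sets (v j) hεn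
  have hpz : ∀ j, p j = 0 ∨ p j ∈ SingSet Ω.sets := by
    intro j
    rcases hpmem j with h | h
    · left; exact h
    · right; exact h
  have hsum := sum_mem_singSet_iterSum Ω.sets m p hpz
  have hδsum : δ ≤ eucNorm (w - ∑ j, p j) := hkey _ hsum
  have htri : eucNorm (w - ∑ j, p j)
      ≤ eucNorm (w - ∑ j, v j) + ∑ j, eucNorm (v j - p j) := by
    have heq : w - ∑ j, p j = (w - ∑ j, v j) + ∑ j, (v j - p j) := by
      rw [Finset.sum_sub_distrib]
      abel
    rw [heq]
    exact (eucNorm_add_le _ _).trans (by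
      gcongr
      exact eucNorm_sum_le _)
  have hbound : ∑ j, eucNorm (v j - p j) ≤ (∑ j, etaFun Ω.sets (v j)) + ε := by
    calc ∑ j, eucNorm (v j - p j)
        ≤ ∑ j, (etaFun Ω.sets (v j) + ε / (m + 1 : ℕ)) := by
          exact Finset.sum_le_sum fun j _ => (hpd j).le
      _ = (∑ j, etaFun Ω.sets (v j)) + ε := by
          rw [Finset.sum_add_distrib, Finset.sum_const, Finset.card_univ,
            Fintype.card_fin, nsmul_eq_mul]
          congr 1
          field_simp
  rw [DFun]
  calc δ ≤ eucNorm (w - ∑ j, p j) := hδsum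
    _ ≤ eucNorm (w - ∑ j, v j) + ∑ j, eucNorm (v j - p j) := htri
    _ ≤ eucNorm (w - ∑ j, v j) + ((∑ j, etaFun Ω.sets (v j)) + ε) := by linarith
    _ = (∑ j, etaFun Ω.sets (v j)) + eucNorm (w - ∑ j, v j) + ε := by ring
end

section
/- (Convolution integral representation on the simplex.) For convergent power series f₁, …, f_n ∈ ℂ{ζ} holomorphic on a disc U of radius r centered at 0, and for ζ ∈ U, the iterated convolution satisfies (1 * f₁ * ⋯ * f_n)(ζ) = ζⁿ ∫_{Δ_n} f₁(ζ s₁) ⋯ f_n(ζ s_n) ds₁ ⋯ ds_n, where Δ_n = { s ∈ ℝ≥0ⁿ : s₁+⋯+s_n ≤ 1 } and 1 denotes the constant function 1. Consequently |(1 * f₁ * ⋯ * f_n)(ζ)| ≤ (|ζ|ⁿ/n!) ∏ⱼ sup_{|ξ|≤|ζ|} |fⱼ(ξ)|. -/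
open MeasureTheory Metric Set

noncomputable section

section IterConvAux

open MeasureTheory Metric Set Pointwise

lemma simplex_subset_Icc (n : ℕ) : simplex n ⊆ Set.Icc (0 : Fin n → ℝ) 1 := by
  rintro s ⟨h0, h1⟩
  refine ⟨fun i => h0 i, fun i => ?_⟩
  calc s i ≤ ∑ j, s j := Finset.single_le_sum (fun j _ => h0 j) (Finset.mem_univ i)
    _ ≤ 1 := h1

lemma isClosed_simplex (n : ℕ) : IsClosed (simplex n) := by
  have h1 : IsClosed {s : Fin n → ℝ | ∀ i, 0 ≤ s i} := by
    have : {s : Fin n → ℝ | ∀ i, 0 ≤ s i} = ⋂ i, {s | 0 ≤ s i} := by ext; simp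
    rw [this]
    exact isClosed_iInter fun i => isClosed_le continuous_const (continuous_apply i)
  have h2 : IsClosed {s : Fin n → ℝ | ∑ i, s i ≤ 1} :=
    isClosed_le (by continuity) continuous_const
  exact h1.inter h2

lemma isCompact_simplex (n : ℕ) : IsCompact (simplex n) :=
  (isCompact_Icc).of_isClosed_subset (isClosed_simplex n) (simplex_subset_Icc n)

lemma measurableSet_simplex (n : ℕ) : MeasurableSet (simplex n) :=
  (isClosed_simplex n).measurableSet

lemma mem_simplex_le_one {n : ℕ} {s : Fin n → ℝ} (hs : s ∈ simplex n) (i : Fin n) :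
    s i ≤ 1 := (simplex_subset_Icc n hs).2 i

lemma contOn_prod {n : ℕ} {r : ℝ} (f : Fin n → ℂ → ℂ)
    (hf : ∀ i, DifferentiableOn ℂ (f i) (ball 0 r))
    {ζ : ℂ} (hζ : ζ ∈ ball (0 : ℂ) r) :
    ContinuousOn (fun s : Fin n → ℝ => ∏ i, f i (s i • ζ)) (simplex n) := by
  apply continuousOn_finset_prod
  intro i _
  apply ((hf i).continuousOn).comp
  · exact (continuous_apply i).continuousOn.smul continuousOn_const
  · intro s hs
    simp only [mem_ball, dist_zero_right] at hζ ⊢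
    rw [norm_smul]
    calc ‖s i‖ * ‖ζ‖ ≤ 1 * ‖ζ‖ := by
          apply mul_le_mul_of_nonneg_right _ (norm_nonneg _)
          rw [Real.norm_eq_abs, abs_of_nonneg (hs.1 i)]
          exact mem_simplex_le_one hs i
      _ < r := by simpa using hζ

lemma integrableOn_prod {n : ℕ} {r : ℝ} (f : Fin n → ℂ → ℂ)
    (hf : ∀ i, DifferentiableOn ℂ (f i) (ball 0 r))
    {ζ : ℂ} (hζ : ζ ∈ ball (0 : ℂ) r) :
    IntegrableOn (fun s : Fin n → ℝ => ∏ i, f i (s i • ζ)) (simplex n) :=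
  (contOn_prod f hf hζ).integrableOn_compact (isCompact_simplex n)

/-- slab: rescaled simplex -/
def slab (n : ℕ) (c : ℝ) : Set (Fin n → ℝ) := {s | (∀ i, 0 ≤ s i) ∧ ∑ i, s i ≤ c}

lemma slab_eq_smul (n : ℕ) {c : ℝ} (hc : 0 < c) : slab n c = c • simplex n := by
  ext u
  constructor
  · rintro ⟨h0, h1⟩
    refine ⟨c⁻¹ • u, ⟨fun i => ?_, ?_⟩, ?_⟩
    · exact mul_nonneg (inv_nonneg.2 hc.le) (h0 i)
    · simp only [Pi.smul_apply, smul_eq_mul, ← Finset.mul_sum]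
      rw [inv_mul_le_iff₀ hc, mul_one]
      exact h1
    · show c • c⁻¹ • u = u
      rw [smul_smul, mul_inv_cancel₀ hc.ne', one_smul]
  · rintro ⟨w, ⟨h0, h1⟩, rfl⟩
    refine ⟨fun i => mul_nonneg hc.le (h0 i), ?_⟩
    simp only [Pi.smul_apply, smul_eq_mul, ← Finset.mul_sum]
    calc c * ∑ i, w i ≤ c * 1 := by exact mul_le_mul_of_nonneg_left h1 hc.le
      _ = c := mul_one c

lemma slab_empty (n : ℕ) {c : ℝ} (hc : c < 0) : slab n c = ∅ := by
  ext u
  simp only [slab, mem_setOf_eq, mem_empty_iff_false, iff_false, not_and, not_le]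
  intro h0
  exact lt_of_lt_of_le hc (Finset.sum_nonneg fun i _ => h0 i)

lemma measurableSet_slab (n : ℕ) (c : ℝ) : MeasurableSet (slab n c) := by
  have h1 : MeasurableSet {s : Fin n → ℝ | ∀ i, 0 ≤ s i} := by
    have : {s : Fin n → ℝ | ∀ i, 0 ≤ s i} = ⋂ i, {s | 0 ≤ s i} := by ext; simp
    rw [this]
    exact MeasurableSet.iInter fun i =>
      measurableSet_le measurable_const (measurable_pi_apply i)
  exact h1.inter (measurableSet_le
    (Finset.measurable_sum Finset.univ fun i _ => measurable_pi_apply i) measurable_const)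

lemma mem_simplex_snoc {n : ℕ} (u : Fin n → ℝ) (y : ℝ) :
    Fin.snoc u y ∈ simplex (n + 1) ↔ 0 ≤ y ∧ u ∈ slab n (1 - y) := by
  simp only [simplex, slab, mem_setOf_eq, Fin.sum_univ_castSucc, Fin.snoc_castSucc,
    Fin.snoc_last]
  constructor
  · rintro ⟨h0, h1⟩
    exact ⟨by simpa using h0 (Fin.last n), fun i => by simpa using h0 i.castSucc, by linarith⟩
  · rintro ⟨hy, h0, h1⟩
    refine ⟨fun i => ?_, by linarith⟩
    induction i using Fin.lastCases with
    | last => simpa using hy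
    | cast i => simpa using h0 i

lemma setIntegral_slab {n : ℕ} (h : (Fin n → ℝ) → ℂ) {c : ℝ} (hc : 0 < c) :
    ∫ u in slab n c, h u = (c ^ n : ℝ) • ∫ w in simplex n, h (c • w) := by
  rw [slab_eq_smul n hc]
  have h2 := MeasureTheory.Measure.setIntegral_comp_smul_of_pos (volume) h (simplex n) hc
  rw [Module.finrank_fin_fun] at h2
  rw [h2, smul_smul, mul_inv_cancel₀ (pow_ne_zero n hc.ne'), one_smul]

lemma conv_slice (n : ℕ) {r : ℝ} (f : Fin (n+1) → ℂ → ℂ)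
    (hf : ∀ i, DifferentiableOn ℂ (f i) (ball 0 r)) {ζ : ℂ} (hζ : ζ ∈ ball (0:ℂ) r) :
    ∫ s in simplex (n+1), ∏ i, f i (s i • ζ)
      = ∫ y in (0:ℝ)..1, (((1-y:ℝ):ℂ)^n
          * (∫ u in simplex n, ∏ i : Fin n, f i.castSucc (((1 - y) * u i) • ζ))
          * f (Fin.last n) (y • ζ)) := by
  set F : (Fin (n+1) → ℝ) → ℂ := fun s => ∏ i, f i (s i • ζ) with hF
  set G : (Fin (n+1) → ℝ) → ℂ := (simplex (n+1)).indicator F with hG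
  have hGint : Integrable G :=
    (integrable_indicator_iff (measurableSet_simplex _)).2 (integrableOn_prod f hf hζ)
  have h1 : ∫ s in simplex (n+1), F s = ∫ s, G s :=
    (integral_indicator (measurableSet_simplex _)).symm
  set e := (MeasurableEquiv.piFinSuccAbove (fun _ : Fin (n+1) => ℝ) (Fin.last n)) with he
  have mp := (volume_preserving_piFinSuccAbove (fun _ : Fin (n+1) => ℝ) (Fin.last n)).symm
  have h2 : ∫ s, G s = ∫ p : ℝ × (Fin n → ℝ), G (e.symm p) :=
    (mp.integral_comp e.symm.measurableEmbedding G).symm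
  have hsymm : ∀ p : ℝ × (Fin n → ℝ), e.symm p = Fin.snoc p.2 p.1 := by
    intro p
    show (Fin.insertNthEquiv (fun _ => ℝ) (Fin.last n)) (p.1, p.2) = _
    simp [Fin.insertNthEquiv, Fin.insertNth_last']
  have hHint : Integrable (fun p : ℝ × (Fin n → ℝ) => G (e.symm p)) :=
    mp.integrable_comp_emb e.symm.measurableEmbedding |>.2 hGint
  have h3 : ∫ p : ℝ × (Fin n → ℝ), G (e.symm p)
      = ∫ y : ℝ, ∫ u : Fin n → ℝ, G (Fin.snoc u y) := by
    simp_rw [hsymm]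
    rw [Measure.volume_eq_prod]
    rw [integral_prod]
    rw [← Measure.volume_eq_prod]
    exact (by simpa [hsymm] using hHint)
  set Φ : ℝ → ℂ := fun y => ((1-y:ℝ):ℂ)^n
      * (∫ u in simplex n, ∏ i : Fin n, f i.castSucc (((1 - y) * u i) • ζ))
      * f (Fin.last n) (y • ζ) with hΦ
  have hGsnoc : ∀ (y : ℝ) (u : Fin n → ℝ), G (Fin.snoc u y) =
      if 0 ≤ y then (slab n (1-y)).indicator
        (fun u => ∏ i : Fin n, f i.castSucc (u i • ζ)) u * f (Fin.last n) (y • ζ) else 0 := by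
    intro y u
    have hFs : F (Fin.snoc u y)
        = (∏ i : Fin n, f i.castSucc (u i • ζ)) * f (Fin.last n) (y • ζ) := by
      simp only [hF, Fin.prod_univ_castSucc, Fin.snoc_castSucc, Fin.snoc_last]
    by_cases hy : 0 ≤ y
    · by_cases hu : u ∈ slab n (1-y)
      · rw [hG, indicator_of_mem ((mem_simplex_snoc u y).2 ⟨hy, hu⟩), hFs,
          if_pos hy, indicator_of_mem hu]
      · rw [hG, indicator_of_notMem, if_pos hy, indicator_of_notMem hu, zero_mul]
        rw [mem_simplex_snoc]
        tauto
    · rw [hG, indicator_of_notMem, if_neg hy]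
      rw [mem_simplex_snoc]
      tauto
  have h4 : ∀ y : ℝ, y ≠ 1 →
      (∫ u : Fin n → ℝ, G (Fin.snoc u y)) = (Ico (0:ℝ) 1).indicator Φ y := by
    intro y hy1
    rcases lt_trichotomy y 1 with hy | hy | hy
    · by_cases hy0 : 0 ≤ y
      · have hc : 0 < 1 - y := by linarith
        have : (fun u : Fin n → ℝ => G (Fin.snoc u y)) = fun u =>
            (slab n (1-y)).indicator (fun u => ∏ i : Fin n, f i.castSucc (u i • ζ)) u
              * f (Fin.last n) (y • ζ) := by
          funext u; rw [hGsnoc, if_pos hy0]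
        rw [this, integral_mul_const, integral_indicator (measurableSet_slab _ _),
          setIntegral_slab _ hc, indicator_of_mem (by exact ⟨hy0, hy⟩)]
        rw [hΦ]
        simp only [Pi.smul_apply, smul_eq_mul]
        rw [Complex.real_smul, Complex.ofReal_pow]
      · have : (fun u : Fin n → ℝ => G (Fin.snoc u y)) = fun _ => 0 := by
          funext u; rw [hGsnoc, if_neg hy0]
        rw [this, integral_zero, indicator_of_notMem (by simp [hy0])]
    · exact absurd hy hy1
    · have : (fun u : Fin n → ℝ => G (Fin.snoc u y)) = fun _ => 0 := by
        funext u
        rw [hGsnoc, if_pos (by linarith), slab_empty n (by linarith)]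
        simp
      rw [this, integral_zero, indicator_of_notMem (by simp; intro; linarith)]
  have h5 : (∫ y : ℝ, ∫ u : Fin n → ℝ, G (Fin.snoc u y))
      = ∫ y : ℝ, (Ico (0:ℝ) 1).indicator Φ y := by
    apply integral_congr_ae
    have hne : ∀ᵐ y : ℝ, y ≠ (1:ℝ) := by
      rw [ae_iff]
      simp only [ne_eq, not_not, Set.setOf_eq_eq_singleton]
      exact measure_singleton 1
    filter_upwards [hne] with y hy using h4 y hy
  have h6 : (∫ y : ℝ, (Ico (0:ℝ) 1).indicator Φ y) = ∫ y in (0:ℝ)..1, Φ y := by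
    rw [integral_indicator measurableSet_Ico,
      Measure.restrict_congr_set Ico_ae_eq_Ioc,
      intervalIntegral.integral_of_le zero_le_one]
  rw [h1, h2, h3, h5, h6]

lemma key (r : ℝ) : ∀ (n : ℕ) (f : Fin n → ℂ → ℂ),
    (∀ i, DifferentiableOn ℂ (f i) (ball 0 r)) →
    ∀ ζ ∈ ball (0:ℂ) r,
      iterConv n f ζ = ζ ^ n * ∫ s in simplex n, ∏ i, f i (s i • ζ) := by
  intro n
  induction n with
  | zero =>
    intro f hf ζ hζ
    have h0 : simplex 0 = Set.univ := by ext s; simp [simplex]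
    show (1 : ℂ) = ζ ^ 0 * ∫ s in simplex 0, ∏ i, f i (s i • ζ)
    rw [h0, pow_zero, one_mul]
    have : (fun s : Fin 0 → ℝ => ∏ i, f i (s i • ζ)) = fun _ => (1:ℂ) := by
      funext s; simp
    rw [this, setIntegral_univ, integral_const, volume_pi, measureReal_def, Measure.pi_univ]
    simp
  | succ n ih =>
    intro f hf ζ hζ
    set g : Fin n → ℂ → ℂ := fun i => f i.castSucc with hg
    have hgd : ∀ i, DifferentiableOn ℂ (g i) (ball 0 r) := fun i => hf i.castSucc
    set Φ : ℝ → ℂ := fun y => ((1-y:ℝ):ℂ)^n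
        * (∫ u in simplex n, ∏ i : Fin n, f i.castSucc (((1 - y) * u i) • ζ))
        * f (Fin.last n) (y • ζ) with hΦ
    have hs : ∀ s ∈ uIcc (0:ℝ) 1,
        iterConv n g (s • ζ) * f (Fin.last n) (ζ - s • ζ) = ζ ^ n * Φ (1 - s) := by
      intro s hs'
      rw [uIcc_of_le zero_le_one] at hs'
      have hsball : s • ζ ∈ ball (0:ℂ) r := by
        simp only [mem_ball, dist_zero_right] at hζ ⊢
        rw [norm_smul, Real.norm_eq_abs, abs_of_nonneg hs'.1]
        calc s * ‖ζ‖ ≤ 1 * ‖ζ‖ := mul_le_mul_of_nonneg_right hs'.2 (norm_nonneg _)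
          _ = ‖ζ‖ := one_mul _
          _ < r := hζ
      rw [ih g hgd (s • ζ) hsball]
      have h1 : ζ - s • ζ = (1 - s) • ζ := by
        rw [sub_smul, one_smul]
      have h2 : ((1 - (1 - s) : ℝ) : ℂ) = (s : ℂ) := by push_cast; ring
      have h3 : (fun u : Fin n → ℝ => ∏ i : Fin n, f i.castSucc (((1 - (1 - s)) * u i) • ζ))
          = fun u => ∏ i : Fin n, g i (u i • (s • ζ)) := by
        funext u
        apply Finset.prod_congr rfl
        intro i _
        rw [hg]
        congr 1
        rw [smul_smul]
        congr 1
        ring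
      rw [hΦ]
      simp only [h1, h2, ← h3]
      rw [Complex.real_smul, mul_pow]
      ring
    show cvl (iterConv n g) (f (Fin.last n)) ζ = _
    rw [cvl, intervalIntegral.integral_congr hs, intervalIntegral.integral_const_mul,
      intervalIntegral.integral_comp_sub_left Φ 1]
    simp only [sub_self, sub_zero]
    rw [← conv_slice n f hf hζ]
    ring

lemma iterConv_one (n : ℕ) (ζ : ℂ) :
    iterConv n (fun _ _ => (1:ℂ)) ζ = ζ ^ n / n.factorial := by
  induction n generalizing ζ with
  | zero => simp [iterConv]
  | succ n ih =>
    show cvl (iterConv n (fun _ _ => (1:ℂ))) (fun _ => (1:ℂ)) ζ = _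
    rw [cvl]
    have h1 : ∀ s ∈ uIcc (0:ℝ) 1,
        iterConv n (fun _ _ => (1:ℂ)) (s • ζ) * (fun _ => (1:ℂ)) (ζ - s • ζ)
        = (s:ℂ)^n * (ζ^n / n.factorial) := by
      intro s _
      rw [ih, Complex.real_smul, mul_pow, mul_div_assoc, mul_one]
    rw [intervalIntegral.integral_congr h1, intervalIntegral.integral_mul_const]
    have h2 : (∫ s in (0:ℝ)..1, ((s:ℝ):ℂ)^n) = ((∫ s in (0:ℝ)..1, s^n : ℝ) : ℂ) := by
      rw [← intervalIntegral.integral_ofReal]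
      norm_num
    rw [h2, integral_pow]
    have hn : ((n:ℂ) + 1) ≠ 0 := Nat.cast_add_one_ne_zero n
    have hfac : (n.factorial : ℂ) ≠ 0 := by
      exact_mod_cast Nat.cast_ne_zero.2 n.factorial_ne_zero
    rw [Nat.factorial_succ]
    push_cast
    field_simp
    ring

lemma volume_simplex (n : ℕ) : (volume (simplex n)).toReal = 1 / n.factorial := by
  have hmem : (1/2 : ℂ) ∈ ball (0:ℂ) 1 := by
    simp only [mem_ball, dist_zero_right]
    rw [show ((1:ℂ)/2) = ((1/2 : ℝ) : ℂ) by norm_num, Complex.norm_real]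
    norm_num
  have hk := key 1 n (fun _ _ => (1:ℂ)) (fun i => differentiableOn_const 1) (1/2) hmem
  rw [iterConv_one] at hk
  have h2 : (fun s : Fin n → ℝ => ∏ i : Fin n, (1:ℂ)) = fun _ => (1:ℂ) := by
    funext s; simp
  rw [h2, setIntegral_const, Complex.real_smul, mul_one] at hk
  have hz : ((1:ℂ)/2)^n ≠ 0 := pow_ne_zero n (by norm_num)
  have hfac : (n.factorial : ℂ) ≠ 0 := by
    exact_mod_cast Nat.cast_ne_zero.2 n.factorial_ne_zero
  have : ((volume (simplex n)).toReal : ℂ) = 1 / n.factorial := by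
    apply mul_left_cancel₀ hz
    rw [← measureReal_def, ← hk, div_eq_mul_one_div]
  have := congrArg Complex.re this
  simpa using this

end IterConvAux

end

/-- Convolution integral representation on the simplex, and the resulting
`1/n!` bound for iterated convolutions. -/
theorem iterConv_simplex_repr (n : ℕ) (r : ℝ) (hr : 0 < r)
    (f : Fin n → ℂ → ℂ) (hf : ∀ i, DifferentiableOn ℂ (f i) (ball 0 r))
    (ζ : ℂ) (hζ : ζ ∈ ball (0 : ℂ) r) :
    iterConv n f ζ = ζ ^ n * ∫ s in simplex n, ∏ i, f i (s i • ζ) ∧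
    ∀ M : Fin n → ℝ,
      (∀ i, ∀ ξ : ℂ, ‖ξ‖ ≤ ‖ζ‖ → ‖f i ξ‖ ≤ M i) →
      ‖iterConv n f ζ‖
        ≤ ‖ζ‖ ^ n / n.factorial * ∏ i, M i := by
  have h1 := key r n f hf ζ hζ
  refine ⟨h1, ?_⟩
  intro M hM
  have hbound : ∀ s ∈ simplex n, ‖∏ i, f i (s i • ζ)‖ ≤ ∏ i, M i := by
    intro s hs
    rw [norm_prod]
    apply Finset.prod_le_prod (fun i _ => norm_nonneg _)
    intro i _
    apply hM i
    rw [norm_smul, Real.norm_eq_abs,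
      abs_of_nonneg (hs.1 i)]
    calc s i * ‖ζ‖ ≤ 1 * ‖ζ‖ :=
          mul_le_mul_of_nonneg_right (mem_simplex_le_one hs i) (norm_nonneg _)
      _ = ‖ζ‖ := one_mul _
  have hI : ‖∫ s in simplex n, ∏ i, f i (s i • ζ)‖
      ≤ (∏ i, M i) * (volume (simplex n)).toReal :=
    norm_setIntegral_le_of_norm_le_const ((isCompact_simplex n).measure_lt_top)
      hbound
  rw [h1]
  calc ‖ζ ^ n * ∫ s in simplex n, ∏ i, f i (s i • ζ)‖
      = ‖ζ‖ ^ n * ‖∫ s in simplex n, ∏ i, f i (s i • ζ)‖ := by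
        rw [norm_mul, norm_pow]
    _ ≤ ‖ζ‖ ^ n * ((∏ i, M i) * (volume (simplex n)).toReal) :=
        mul_le_mul_of_nonneg_left hI (pow_nonneg (norm_nonneg _) n)
    _ = ‖ζ‖ ^ n / n.factorial * ∏ i, M i := by
        rw [volume_simplex]; ring
end
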